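/- arXiv:1204.2561 — 5 statements merged into one kernel-verified Lean document; each statement's English description precedes it below -/
import Mathlib

section
/- For any θ₁, θ₂ ∈ ℝ, the set BAD^Θ(2/3, 1/3) = {(η₁,η₂) ∈ ℝ² : inf_{q ∈ ℤ₊} max(q^{2/3}·‖qθ₁ − η₁‖, q^{1/3}·‖qθ₂ − η₂‖) > 0} is non-empty, where ‖·‖ denotes distance to the nearest integer. -/
open scoped BigOperators

/-- Distance from a real number to the nearest integer. -/
noncomputable def dni (x : ℝ) : ℝ := |x - round x|

/-- `1, θ₁, θ₂` are linearly independent over `ℚ` (equivalently over `ℤ`). -/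
def LinIndep (θ₁ θ₂ : ℝ) : Prop :=
  ∀ a b c : ℤ, (a : ℝ) + (b : ℝ) * θ₁ + (c : ℝ) * θ₂ = 0 → a = 0 ∧ b = 0 ∧ c = 0

/-- The weighted size `max(|m₁|, |m₂|²)` of an integer vector. -/
noncomputable def wsize (m : ℤ × ℤ) : ℝ := max |(m.1 : ℝ)| ((m.2 : ℝ) ^ 2)

/-- The value of the linear form `‖θ₁ m₁ + θ₂ m₂‖`. -/
noncomputable def zeta (θ₁ θ₂ : ℝ) (m : ℤ × ℤ) : ℝ := dni (θ₁ * m.1 + θ₂ * m.2)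

/-- `M = √(max(|m₁|, |m₂|²))`. -/
noncomputable def Mval (m : ℤ × ℤ) : ℝ := Real.sqrt (wsize m)

/-- `m = (m₁, m₂)` is a best approximation vector for `(θ₁, θ₂)` w.r.t. the
weighted norm `max(|x₁|, |x₂|²)`. -/
def IsBestApprox (θ₁ θ₂ : ℝ) (m : ℤ × ℤ) : Prop :=
  m ≠ 0 ∧ ∃ m₀ : ℤ,
    |(m₀ : ℝ) + θ₁ * m.1 + θ₂ * m.2| = zeta θ₁ θ₂ m ∧
    ∀ x₀ x₁ x₂ : ℤ,
      max |(x₁ : ℝ)| ((x₂ : ℝ) ^ 2) ≤ wsize m →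
      |(x₀ : ℝ) + θ₁ * x₁ + θ₂ * x₂| ≤ zeta θ₁ θ₂ m →
      ((x₀, x₁, x₂) = ((0 : ℤ), (0 : ℤ), (0 : ℤ)) ∨
        (x₀, x₁, x₂) = (m₀, m.1, m.2) ∨ (x₀, x₁, x₂) = (-m₀, -m.1, -m.2))

/-- An enumeration `m : ℕ → ℤ × ℤ` of all the best approximation vectors of
`(θ₁, θ₂)`, ordered so that `M_ν` is strictly increasing (each best
approximation appears up to sign). -/
def IsBestApproxSeq (θ₁ θ₂ : ℝ) (m : ℕ → ℤ × ℤ) : Prop :=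
  (∀ ν, IsBestApprox θ₁ θ₂ (m ν)) ∧
  (StrictMono fun ν => Mval (m ν)) ∧
  (∀ p : ℤ × ℤ, IsBestApprox θ₁ θ₂ p → ∃ ν, p = m ν ∨ p = -(m ν))

/-- `(η₁, η₂)` belongs to `BAD^Θ(2/3, 1/3)`. -/
def BADT (θ₁ θ₂ η₁ η₂ : ℝ) : Prop :=
  ∃ c > 0, ∀ q : ℕ, 0 < q →
    c ≤ max ((q : ℝ) ^ ((2 : ℝ) / 3) * dni (q * θ₁ - η₁))
          ((q : ℝ) ^ ((1 : ℝ) / 3) * dni (q * θ₂ - η₂))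

lemma dni_nonneg (x : ℝ) : 0 ≤ dni x := abs_nonneg _

lemma round_eq_of_abs_lt {x : ℝ} {n : ℤ} (h : |x - n| < 1/2) : round x = n := by
  rw [round_eq]
  rw [abs_lt] at h
  rw [Int.floor_eq_iff]
  constructor <;> push_cast <;> linarith

lemma dni_le (x : ℝ) (n : ℤ) : dni x ≤ |x - n| := by
  rcases lt_or_ge (|x - n|) (1/2) with h | h
  · rw [dni, round_eq_of_abs_lt h]
  · exact le_trans (abs_sub_round x) h

-- the linear form
noncomputable def lf (θ₁ θ₂ : ℝ) (m : ℤ × ℤ) : ℝ := θ₁ * m.1 + θ₂ * m.2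

noncomputable def box (l : ℕ) : Finset (ℤ × ℤ) :=
  (Finset.Icc (-(16^l), -(4^l)) (16^l, 4^l)).erase 0

lemma mem_box {l : ℕ} {m : ℤ × ℤ} :
    m ∈ box l ↔ m ≠ 0 ∧ |m.1| ≤ 16^l ∧ |m.2| ≤ 4^l := by
  simp only [box, Finset.mem_erase, Finset.mem_Icc, Prod.le_def, abs_le]
  constructor
  · rintro ⟨h0, ⟨h1, h2⟩, h3, h4⟩; exact ⟨h0, ⟨h1, h3⟩, ⟨h2, h4⟩⟩
  · rintro ⟨h0, ⟨h1, h3⟩, h2, h4⟩; exact ⟨h0, ⟨h1, h2⟩, h3, h4⟩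

lemma box_nonempty (l : ℕ) : (box l).Nonempty := by
  refine ⟨(1, 0), ?_⟩
  rw [mem_box]
  refine ⟨by simp [Prod.ext_iff], by simp [one_le_pow₀], by simp [pow_nonneg]⟩

lemma box_subset {l : ℕ} : box l ⊆ box (l+1) := by
  intro m hm
  rw [mem_box] at hm ⊢
  have h1 : (16:ℤ)^l ≤ 16^(l+1) := by
    apply pow_le_pow_right₀ <;> omega
  have h2 : (4:ℤ)^l ≤ 4^(l+1) := by
    apply pow_le_pow_right₀ <;> omega
  exact ⟨hm.1, hm.2.1.trans h1, hm.2.2.trans h2⟩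

lemma exists_small (θ₁ θ₂ : ℝ) (l : ℕ) :
    ∃ p ∈ box l, dni (lf θ₁ θ₂ p) ≤ ((64:ℝ)^l)⁻¹ := by
  set D : ℤ := 64^l with hD
  have hDpos : (0:ℤ) < D := by positivity
  have hDR : (0:ℝ) < (D:ℝ) := by exact_mod_cast hDpos
  have hmap : ∀ a ∈ Finset.Icc ((0,0) : ℤ × ℤ) (16^l, 4^l),
      (⌊Int.fract (lf θ₁ θ₂ a) * (D:ℝ)⌋) ∈ Finset.Icc (0:ℤ) (D - 1) := by
    intro a _
    rw [Finset.mem_Icc]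
    constructor
    · exact Int.floor_nonneg.mpr (mul_nonneg (Int.fract_nonneg _) hDR.le)
    · have : ⌊Int.fract (lf θ₁ θ₂ a) * (D:ℝ)⌋ < D := by
        rw [Int.floor_lt]
        calc Int.fract (lf θ₁ θ₂ a) * (D:ℝ) < 1 * D :=
              mul_lt_mul_of_pos_right (Int.fract_lt_one _) hDR
          _ = D := one_mul _
      omega
  have hcard : (Finset.Icc (0:ℤ) (D - 1)).card
      < (Finset.Icc ((0,0) : ℤ × ℤ) (16^l, 4^l)).card := by
    rw [Finset.Icc_prod_def, Finset.card_product]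
    simp only [Int.card_Icc]
    have h16 : (0:ℤ) < 16^l := by positivity
    have h4 : (0:ℤ) < 4^l := by positivity
    have hDval : (16:ℤ)^l * 4^l = D := by
      rw [hD, ← mul_pow]; norm_num
    zify
    rw [Int.toNat_of_nonneg (by omega), Int.toNat_of_nonneg (by omega),
      Int.toNat_of_nonneg (by omega)]
    nlinarith
  obtain ⟨x, hx, y, hy, hxy, hfeq⟩ :=
    Finset.exists_ne_map_eq_of_card_lt_of_maps_to hcard hmap
  simp only [Finset.mem_Icc, Prod.le_def] at hx hy
  obtain ⟨⟨hx1, hx2⟩, hx3, hx4⟩ := hx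
  obtain ⟨⟨hy1, hy2⟩, hy3, hy4⟩ := hy
  refine ⟨x - y, ?_, ?_⟩
  · rw [mem_box]
    refine ⟨sub_ne_zero.mpr hxy, ?_, ?_⟩
    · simp only [Prod.fst_sub]; rw [abs_le]
      constructor <;> linarith
    · simp only [Prod.snd_sub]; rw [abs_le]
      constructor <;> linarith
  · have hlin : lf θ₁ θ₂ (x - y) = lf θ₁ θ₂ x - lf θ₁ θ₂ y := by
      simp only [lf, Prod.fst_sub, Prod.snd_sub]
      push_cast; ring
    set u := Int.fract (lf θ₁ θ₂ x) with hu
    set v := Int.fract (lf θ₁ θ₂ y) with hv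
    have key : |u - v| < ((64:ℝ)^l)⁻¹ := by
      have h1 := Int.floor_le (u * (D:ℝ))
      have h2 := Int.lt_floor_add_one (u * (D:ℝ))
      have h3 := Int.floor_le (v * (D:ℝ))
      have h4 := Int.lt_floor_add_one (v * (D:ℝ))
      rw [hfeq] at h1 h2
      have h5 : |u * D - v * D| < 1 := by
        rw [abs_lt]; constructor <;> linarith
      have h6 : |u - v| * D < 1 := by
        calc |u - v| * D = |u - v| * |(D:ℝ)| := by rw [abs_of_pos hDR]
          _ = |u * D - v * D| := by rw [← abs_mul]; ring_nf
          _ < 1 := h5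
      have hDR' : ((64:ℝ)^l) = (D:ℝ) := by rw [hD]; push_cast; ring
      rw [hDR', ← one_div, lt_div_iff₀ hDR]
      exact h6
    calc dni (lf θ₁ θ₂ (x - y))
        ≤ |lf θ₁ θ₂ (x-y) - ((⌊lf θ₁ θ₂ x⌋ - ⌊lf θ₁ θ₂ y⌋ : ℤ) : ℝ)| := dni_le _ _
      _ = |u - v| := by
          rw [hlin, hu, hv]; push_cast
          rw [← Int.self_sub_floor, ← Int.self_sub_floor]
          ring_nf
      _ ≤ ((64:ℝ)^l)⁻¹ := le_of_lt key

noncomputable def pickmin (θ₁ θ₂ : ℝ) (l : ℕ) : ℤ × ℤ :=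
  (Finset.exists_min_image (box l) (fun p => dni (lf θ₁ θ₂ p)) (box_nonempty l)).choose

lemma pickmin_spec (θ₁ θ₂ : ℝ) (l : ℕ) :
    pickmin θ₁ θ₂ l ∈ box l ∧
      ∀ x ∈ box l, dni (lf θ₁ θ₂ (pickmin θ₁ θ₂ l)) ≤ dni (lf θ₁ θ₂ x) := by
  have h := (Finset.exists_min_image (box l) (fun p => dni (lf θ₁ θ₂ p))
    (box_nonempty l)).choose_spec
  exact ⟨h.1, h.2⟩

open Classical in
noncomputable def mm (θ₁ θ₂ : ℝ) : ℕ → ℤ × ℤ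
  | 0 => pickmin θ₁ θ₂ 0
  | l+1 => if ∀ x ∈ box (l+1), dni (lf θ₁ θ₂ (mm θ₁ θ₂ l)) ≤ dni (lf θ₁ θ₂ x)
           then mm θ₁ θ₂ l else pickmin θ₁ θ₂ (l+1)

lemma mm_spec (θ₁ θ₂ : ℝ) : ∀ l : ℕ, mm θ₁ θ₂ l ∈ box l ∧
    ∀ x ∈ box l, dni (lf θ₁ θ₂ (mm θ₁ θ₂ l)) ≤ dni (lf θ₁ θ₂ x) := by
  intro l
  induction l with
  | zero => exact pickmin_spec θ₁ θ₂ 0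
  | succ l ih =>
    by_cases h : ∀ x ∈ box (l+1), dni (lf θ₁ θ₂ (mm θ₁ θ₂ l)) ≤ dni (lf θ₁ θ₂ x)
    · rw [mm, if_pos h]
      exact ⟨box_subset ih.1, h⟩
    · rw [mm, if_neg h]
      exact pickmin_spec θ₁ θ₂ (l+1)

lemma mm_new (θ₁ θ₂ : ℝ) (l : ℕ) (hne : mm θ₁ θ₂ (l+1) ≠ mm θ₁ θ₂ l) :
    mm θ₁ θ₂ (l+1) ∉ box l := by
  by_cases h : ∀ x ∈ box (l+1), dni (lf θ₁ θ₂ (mm θ₁ θ₂ l)) ≤ dni (lf θ₁ θ₂ x)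
  · exact absurd (by rw [mm, if_pos h]) hne
  · intro hmem
    push_neg at h
    obtain ⟨x₀, hx₀, hlt⟩ := h
    have he : mm θ₁ θ₂ (l+1) = pickmin θ₁ θ₂ (l+1) := by
      rw [mm, if_neg (by push_neg; exact ⟨x₀, hx₀, hlt⟩)]
    have h1 := (mm_spec θ₁ θ₂ l).2 _ hmem
    have h2 := (pickmin_spec θ₁ θ₂ (l+1)).2 x₀ hx₀
    rw [← he] at h2
    linarith

lemma mm_small (θ₁ θ₂ : ℝ) (l : ℕ) :
    dni (lf θ₁ θ₂ (mm θ₁ θ₂ l)) ≤ ((64:ℝ)^l)⁻¹ := by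
  obtain ⟨p, hp, hsmall⟩ := exists_small θ₁ θ₂ l
  exact le_trans ((mm_spec θ₁ θ₂ l).2 p hp) hsmall


lemma mm_mem (θ₁ θ₂ : ℝ) (l : ℕ) : mm θ₁ θ₂ l ∈ box l := (mm_spec θ₁ θ₂ l).1

lemma mm_bounds (θ₁ θ₂ : ℝ) (l : ℕ) :
    |(mm θ₁ θ₂ l).1| ≤ 16^l ∧ |(mm θ₁ θ₂ l).2| ≤ 4^l := by
  have h := mm_mem θ₁ θ₂ l
  rw [mem_box] at h
  exact ⟨h.2.1, h.2.2⟩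


noncomputable def wd (l : ℕ) : ℝ := ((2:ℝ) ^ (4*l+8))⁻¹
noncomputable def ht (l : ℕ) : ℝ := ((2:ℝ) ^ (2*l+4))⁻¹
noncomputable def del : ℝ := ((2:ℝ)^14)⁻¹

lemma del_pos : 0 < del := by norm_num [del]
lemma wd_pos (l : ℕ) : 0 < wd l := by rw [wd]; positivity
lemma ht_pos (l : ℕ) : 0 < ht l := by rw [ht]; positivity

lemma pow_ratio (x : ℝ) (hx : 0 < x) (s t : ℕ) : x^s * (x^(s+t))⁻¹ = (x^t)⁻¹ := by
  rw [pow_add]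
  field_simp

lemma wd_succ (l : ℕ) : wd l = 16 * wd (l+1) := by
  rw [wd, wd]
  have h : (2:ℝ)^(4*(l+1)+8) = 2^(4*l+8) * 16 := by
    rw [show 4*(l+1)+8 = (4*l+8)+4 by ring, pow_add]; norm_num
  rw [h, mul_inv]
  have h2 : ((2:ℝ)^(4*l+8)) ≠ 0 := by positivity
  field_simp

lemma ht_succ (l : ℕ) : ht l = 4 * ht (l+1) := by
  rw [ht, ht]
  have h : (2:ℝ)^(2*(l+1)+4) = 2^(2*l+4) * 4 := by
    rw [show 2*(l+1)+4 = (2*l+4)+2 by ring, pow_add]; norm_num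
  rw [h, mul_inv]
  have h2 : ((2:ℝ)^(2*l+4)) ≠ 0 := by positivity
  field_simp

lemma c16 (l : ℕ) : (16:ℝ)^l = 2^(4*l) := by
  rw [show (16:ℝ) = 2^4 by norm_num, ← pow_mul]

lemma c4 (l : ℕ) : (4:ℝ)^l = 2^(2*l) := by
  rw [show (4:ℝ) = 2^2 by norm_num, ← pow_mul]

lemma pw1 (l : ℕ) : (16:ℝ)^(l+1) * wd (l+1) = 1/256 := by
  rw [c16, wd, show 4*(l+1)+8 = (4*(l+1))+8 by ring, pow_ratio 2 (by norm_num)]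
  norm_num

lemma pw2 (l : ℕ) : (4:ℝ)^(l+1) * ht (l+1) = 1/16 := by
  rw [c4, ht, show 2*(l+1)+4 = (2*(l+1))+4 by ring, pow_ratio 2 (by norm_num)]
  norm_num

lemma pw3 (l : ℕ) : (16:ℝ)^(l+1) * wd l = 1/16 := by
  rw [c16, wd, show 4*l+8 = (4*(l+1))+4 by ring, pow_ratio 2 (by norm_num)]
  norm_num

lemma pw4 (l : ℕ) : (4:ℝ)^(l+1) * ht l = 1/4 := by
  rw [c4, ht, show 2*l+4 = (2*(l+1))+2 by ring, pow_ratio 2 (by norm_num)]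
  norm_num

lemma pw5 (l : ℕ) : (16:ℝ)^l * wd (l+1) = 1/4096 := by
  rw [c16, wd, show 4*(l+1)+8 = (4*l)+12 by ring, pow_ratio 2 (by norm_num)]
  norm_num

lemma pw6 (l : ℕ) : (4:ℝ)^l * ht (l+1) = 1/64 := by
  rw [c4, ht, show 2*(l+1)+4 = (2*l)+6 by ring, pow_ratio 2 (by norm_num)]
  norm_num

lemma wd0 : wd 0 = ((2:ℝ)^8)⁻¹ := by rw [wd]
lemma ht0 : ht 0 = ((2:ℝ)^4)⁻¹ := by rw [ht]

noncomputable def shiftL (c w w' : ℝ) : ℝ := if c < 0 then w - w' else 0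
noncomputable def shiftH (c w w' : ℝ) : ℝ := if c < 0 then 0 else w - w'

lemma shiftL_nonneg {c w w' : ℝ} (h : w' ≤ w) : 0 ≤ shiftL c w w' := by
  rw [shiftL]; split <;> linarith
lemma shiftL_le {c w w' : ℝ} (h : 0 ≤ w - w') : shiftL c w w' ≤ w - w' := by
  rw [shiftL]; split <;> linarith
lemma shiftH_nonneg {c w w' : ℝ} (h : w' ≤ w) : 0 ≤ shiftH c w w' := by
  rw [shiftH]; split <;> linarith
lemma shiftH_le {c w w' : ℝ} (h : 0 ≤ w - w') : shiftH c w w' ≤ w - w' := by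
  rw [shiftH]; split <;> linarith

lemma seg_low {c a w w' x : ℝ} (hw' : 0 ≤ w') (hww : w' ≤ w)
    (h1 : a + shiftL c w w' ≤ x) (h2 : x ≤ a + shiftL c w w' + w') :
    min (c*a) (c*(a+w)) ≤ c*x ∧ c*x ≤ min (c*a) (c*(a+w)) + |c| * w' := by
  rcases lt_or_ge c 0 with hc | hc
  · rw [shiftL, if_pos hc] at h1 h2
    rw [abs_of_neg hc, min_eq_right (by nlinarith)]
    constructor <;> nlinarith
  · rw [shiftL, if_neg (not_lt.mpr hc)] at h1 h2
    rw [abs_of_nonneg hc, min_eq_left (by nlinarith)]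
    constructor <;> nlinarith

lemma seg_high {c a w w' x : ℝ} (hw' : 0 ≤ w') (hww : w' ≤ w)
    (h1 : a + shiftH c w w' ≤ x) (h2 : x ≤ a + shiftH c w w' + w') :
    max (c*a) (c*(a+w)) - |c| * w' ≤ c*x ∧ c*x ≤ max (c*a) (c*(a+w)) := by
  rcases lt_or_ge c 0 with hc | hc
  · rw [shiftH, if_pos hc] at h1 h2
    rw [abs_of_neg hc, max_eq_left (by nlinarith)]
    constructor <;> nlinarith
  · rw [shiftH, if_neg (not_lt.mpr hc)] at h1 h2
    rw [abs_of_nonneg hc, max_eq_right (by nlinarith)]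
    constructor <;> nlinarith

noncomputable def lov (θ₁ θ₂ : ℝ) (l : ℕ) (ab : ℝ × ℝ) : ℝ :=
  min (((mm θ₁ θ₂ (l+1)).1:ℝ) * ab.1) (((mm θ₁ θ₂ (l+1)).1:ℝ) * (ab.1 + wd l)) +
  min (((mm θ₁ θ₂ (l+1)).2:ℝ) * ab.2) (((mm θ₁ θ₂ (l+1)).2:ℝ) * (ab.2 + ht l))

noncomputable def vcv (θ₁ θ₂ : ℝ) (l : ℕ) : ℝ :=
  |((mm θ₁ θ₂ (l+1)).1:ℝ)| * wd (l+1) + |((mm θ₁ θ₂ (l+1)).2:ℝ)| * ht (l+1)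

open Classical in
noncomputable def cornext (θ₁ θ₂ : ℝ) (l : ℕ) (ab : ℝ × ℝ) : ℝ × ℝ :=
  if mm θ₁ θ₂ (l+1) = mm θ₁ θ₂ l then ab
  else if ∀ n : ℤ, (n:ℝ) ≤ lov θ₁ θ₂ l ab - del ∨ lov θ₁ θ₂ l ab + vcv θ₁ θ₂ l + del ≤ (n:ℝ)
    then (ab.1 + shiftL ((mm θ₁ θ₂ (l+1)).1:ℝ) (wd l) (wd (l+1)),
          ab.2 + shiftL ((mm θ₁ θ₂ (l+1)).2:ℝ) (ht l) (ht (l+1)))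
    else (ab.1 + shiftH ((mm θ₁ θ₂ (l+1)).1:ℝ) (wd l) (wd (l+1)),
          ab.2 + shiftH ((mm θ₁ θ₂ (l+1)).2:ℝ) (ht l) (ht (l+1)))

noncomputable def cor (θ₁ θ₂ : ℝ) : ℕ → ℝ × ℝ
  | 0 => if (mm θ₁ θ₂ 0).1 = 0 then ((0:ℝ), (1/2:ℝ)) else ((1/2:ℝ), (0:ℝ))
  | l+1 => cornext θ₁ θ₂ l (cor θ₁ θ₂ l)

lemma wd_antitone (l : ℕ) : wd (l+1) ≤ wd l := by
  rw [wd_succ l]; nlinarith [wd_pos (l+1)]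
lemma ht_antitone (l : ℕ) : ht (l+1) ≤ ht l := by
  rw [ht_succ l]; nlinarith [ht_pos (l+1)]

lemma cor_nest (θ₁ θ₂ : ℝ) (l : ℕ) :
    (cor θ₁ θ₂ l).1 ≤ (cor θ₁ θ₂ (l+1)).1 ∧
    (cor θ₁ θ₂ (l+1)).1 + wd (l+1) ≤ (cor θ₁ θ₂ l).1 + wd l ∧
    (cor θ₁ θ₂ l).2 ≤ (cor θ₁ θ₂ (l+1)).2 ∧
    (cor θ₁ θ₂ (l+1)).2 + ht (l+1) ≤ (cor θ₁ θ₂ l).2 + ht l := by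
  have hw : wd (l+1) ≤ wd l := wd_antitone l
  have hh : ht (l+1) ≤ ht l := ht_antitone l
  have s1 := shiftL_nonneg (c := ((mm θ₁ θ₂ (l+1)).1:ℝ)) hw
  have s2 := shiftL_le (c := ((mm θ₁ θ₂ (l+1)).1:ℝ)) (by linarith : (0:ℝ) ≤ wd l - wd (l+1))
  have s3 := shiftL_nonneg (c := ((mm θ₁ θ₂ (l+1)).2:ℝ)) hh
  have s4 := shiftL_le (c := ((mm θ₁ θ₂ (l+1)).2:ℝ)) (by linarith : (0:ℝ) ≤ ht l - ht (l+1))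
  have s5 := shiftH_nonneg (c := ((mm θ₁ θ₂ (l+1)).1:ℝ)) hw
  have s6 := shiftH_le (c := ((mm θ₁ θ₂ (l+1)).1:ℝ)) (by linarith : (0:ℝ) ≤ wd l - wd (l+1))
  have s7 := shiftH_nonneg (c := ((mm θ₁ θ₂ (l+1)).2:ℝ)) hh
  have s8 := shiftH_le (c := ((mm θ₁ θ₂ (l+1)).2:ℝ)) (by linarith : (0:ℝ) ≤ ht l - ht (l+1))
  have hc : cor θ₁ θ₂ (l+1) = cornext θ₁ θ₂ l (cor θ₁ θ₂ l) := rfl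
  rw [hc, cornext]
  split
  · exact ⟨le_refl _, by linarith, le_refl _, by linarith⟩
  · split
    · exact ⟨by dsimp only; linarith, by dsimp only; linarith,
        by dsimp only; linarith, by dsimp only; linarith⟩
    · exact ⟨by dsimp only; linarith, by dsimp only; linarith,
        by dsimp only; linarith, by dsimp only; linarith⟩

lemma cor_mono (θ₁ θ₂ : ℝ) {k l : ℕ} (hkl : k ≤ l) :
    (cor θ₁ θ₂ k).1 ≤ (cor θ₁ θ₂ l).1 ∧
    (cor θ₁ θ₂ l).1 + wd l ≤ (cor θ₁ θ₂ k).1 + wd k ∧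
    (cor θ₁ θ₂ k).2 ≤ (cor θ₁ θ₂ l).2 ∧
    (cor θ₁ θ₂ l).2 + ht l ≤ (cor θ₁ θ₂ k).2 + ht k := by
  induction l, hkl using Nat.le_induction with
  | base => exact ⟨le_refl _, le_refl _, le_refl _, le_refl _⟩
  | succ n hn ih =>
    obtain ⟨i1, i2, i3, i4⟩ := ih
    obtain ⟨j1, j2, j3, j4⟩ := cor_nest θ₁ θ₂ n
    exact ⟨i1.trans j1, j2.trans i2, i3.trans j3, j4.trans i4⟩

lemma half_int (t : ℝ) (h : t = 1/2 ∨ t = -(1/2)) (n : ℤ) : 1/2 ≤ |t - n| := by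
  have hn : n ≤ 0 ∨ 1 ≤ n := by omega
  rcases h with h | h <;> subst h <;> rw [le_abs] <;> rcases hn with hn | hn
  · left; have : (n:ℝ) ≤ 0 := by exact_mod_cast hn
    linarith
  · right; have : (1:ℝ) ≤ (n:ℝ) := by exact_mod_cast hn
    linarith
  · rcases (by omega : n ≤ -1 ∨ 0 ≤ n) with hn' | hn'
    · left; have : (n:ℝ) ≤ -1 := by exact_mod_cast hn'
      linarith
    · right; have : (0:ℝ) ≤ (n:ℝ) := by exact_mod_cast hn'
      linarith
  · right; have : (1:ℝ) ≤ (n:ℝ) := by exact_mod_cast hn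
    linarith

lemma cor_safe (θ₁ θ₂ : ℝ) : ∀ l : ℕ, ∀ j : ℕ, j ≤ l → ∀ x y : ℝ,
    (cor θ₁ θ₂ l).1 ≤ x → x ≤ (cor θ₁ θ₂ l).1 + wd l →
    (cor θ₁ θ₂ l).2 ≤ y → y ≤ (cor θ₁ θ₂ l).2 + ht l →
    ∀ n : ℤ, del ≤ |((mm θ₁ θ₂ j).1 : ℝ) * x + ((mm θ₁ θ₂ j).2 : ℝ) * y - n| := by
  intro l
  induction l with
  | zero =>
    intro j hj x y hx1 hx2 hy1 hy2 n
    obtain rfl : j = 0 := Nat.le_zero.mp hj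
    have hm := mm_mem θ₁ θ₂ 0
    rw [mem_box] at hm
    obtain ⟨hm0, hm1, hm2⟩ := hm
    simp only [pow_zero] at hm1 hm2
    obtain ⟨hb1, hb2⟩ := abs_le.mp hm1
    obtain ⟨hb3, hb4⟩ := abs_le.mp hm2
    set c₁ : ℝ := ((mm θ₁ θ₂ 0).1 : ℝ) with hc₁
    set c₂ : ℝ := ((mm θ₁ θ₂ 0).2 : ℝ) with hc₂
    have hc₁b : |c₁| ≤ 1 := by
      rw [hc₁, ← Int.cast_abs]; exact_mod_cast hm1
    have hc₂b : |c₂| ≤ 1 := by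
      rw [hc₂, ← Int.cast_abs]; exact_mod_cast hm2
    -- the base corner
    have key : ∃ a b : ℝ, cor θ₁ θ₂ 0 = (a, b) ∧ (c₁ * a + c₂ * b = 1/2 ∨ c₁ * a + c₂ * b = -(1/2)) := by
      by_cases hz : (mm θ₁ θ₂ 0).1 = 0
      · refine ⟨0, 1/2, by rw [cor, if_pos hz], ?_⟩
        have hne2 : (mm θ₁ θ₂ 0).2 ≠ 0 := fun hcontr =>
          hm0 (Prod.ext_iff.mpr ⟨hz, hcontr⟩)
        have h2 : (mm θ₁ θ₂ 0).2 = 1 ∨ (mm θ₁ θ₂ 0).2 = -1 := by omega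
        rcases h2 with h2 | h2 <;> rw [hc₁, hc₂, hz, h2] <;> norm_num
      · refine ⟨1/2, 0, by rw [cor, if_neg hz], ?_⟩
        have h1 : (mm θ₁ θ₂ 0).1 = 1 ∨ (mm θ₁ θ₂ 0).1 = -1 := by omega
        rcases h1 with h1 | h1 <;> rw [hc₁, hc₂, h1] <;> norm_num
    obtain ⟨a, b, hab, hval⟩ := key
    rw [hab] at hx1 hx2 hy1 hy2
    simp only at hx1 hx2 hy1 hy2
    have hhalf := half_int _ hval n
    have hdiff : |(c₁ * x + c₂ * y) - (c₁ * a + c₂ * b)| ≤ wd 0 + ht 0 := by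
      have e : (c₁ * x + c₂ * y) - (c₁ * a + c₂ * b) = c₁ * (x - a) + c₂ * (y - b) := by ring
      rw [e]
      calc |c₁ * (x - a) + c₂ * (y - b)| ≤ |c₁ * (x-a)| + |c₂ * (y-b)| := abs_add_le _ _
        _ = |c₁| * |x-a| + |c₂| * |y-b| := by rw [abs_mul, abs_mul]
        _ ≤ 1 * wd 0 + 1 * ht 0 := by
            have h1 : |x - a| ≤ wd 0 := by rw [abs_of_nonneg (by linarith)]; linarith
            have h2 : |y - b| ≤ ht 0 := by rw [abs_of_nonneg (by linarith)]; linarith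
            have := abs_nonneg (x-a); have := abs_nonneg (y-b)
            apply add_le_add <;> apply mul_le_mul <;> first | assumption | linarith
        _ = wd 0 + ht 0 := by ring
    have hnum : wd 0 + ht 0 + del ≤ 1/2 := by
      rw [wd0, ht0, del]; norm_num
    have htri : |c₁ * a + c₂ * b - n| - |(c₁ * x + c₂ * y) - (c₁ * a + c₂ * b)|
        ≤ |c₁ * x + c₂ * y - n| := by
      have := abs_sub_abs_le_abs_sub (c₁ * a + c₂ * b - n) (c₁ * x + c₂ * y - n)
      have e : (c₁ * a + c₂ * b - n) - (c₁ * x + c₂ * y - n) = -((c₁ * x + c₂ * y) - (c₁ * a + c₂ * b)) := by ring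
      rw [e, abs_neg] at this
      linarith [abs_sub_abs_le_abs_sub (c₁ * a + c₂ * b - n) (c₁ * x + c₂ * y - n)]
    linarith
  | succ l ih =>
    intro j hj x y hx1 hx2 hy1 hy2
    obtain ⟨g1, g2, g3, g4⟩ := cor_nest θ₁ θ₂ l
    rcases Nat.lt_succ_iff_lt_or_eq.mp (Nat.lt_succ_of_le hj) with hjl | hjeq
    · -- j ≤ l : inherited
      exact ih j (Nat.lt_succ_iff.mp hjl) x y (by linarith) (by linarith) (by linarith) (by linarith)
    · subst hjeq
      by_cases hne : mm θ₁ θ₂ (l+1) = mm θ₁ θ₂ l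
      · rw [hne]
        exact ih l le_rfl x y (by linarith) (by linarith) (by linarith) (by linarith)
      · -- the new constraint case
        have hcor : cor θ₁ θ₂ (l+1) = cornext θ₁ θ₂ l (cor θ₁ θ₂ l) := rfl
        rw [hcor, cornext, if_neg hne] at hx1 hx2 hy1 hy2
        set a : ℝ := (cor θ₁ θ₂ l).1 with ha
        set b : ℝ := (cor θ₁ θ₂ l).2 with hb
        set c₁ : ℝ := ((mm θ₁ θ₂ (l+1)).1 : ℝ) with hc₁
        set c₂ : ℝ := ((mm θ₁ θ₂ (l+1)).2 : ℝ) with hc₂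
        -- bounds on coefficients
        have hm := mm_mem θ₁ θ₂ (l+1)
        rw [mem_box] at hm
        obtain ⟨hm0, hm1, hm2⟩ := hm
        have hc₁b : |c₁| ≤ (16:ℝ)^(l+1) := by
          rw [hc₁, ← Int.cast_abs]; exact_mod_cast hm1
        have hc₂b : |c₂| ≤ (4:ℝ)^(l+1) := by
          rw [hc₂, ← Int.cast_abs]; exact_mod_cast hm2
        have habs1 : (0:ℝ) ≤ |c₁| := abs_nonneg _
        have habs2 : (0:ℝ) ≤ |c₂| := abs_nonneg _
        -- slack
        have hbig : 1/4096 ≤ |c₁| * wd (l+1) ∨ 1/64 ≤ |c₂| * ht (l+1) := by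
          have hnot := mm_new θ₁ θ₂ l hne
          rw [mem_box] at hnot
          push_neg at hnot
          have hcase : 16^l < |(mm θ₁ θ₂ (l+1)).1| ∨ 4^l < |(mm θ₁ θ₂ (l+1)).2| := by
            by_contra hcon
            push_neg at hcon
            exact absurd (hnot hm0 hcon.1) (not_lt.mpr hcon.2)
          rcases hcase with h | h
          · left
            have hcast : (16:ℝ)^l ≤ |c₁| := by
              rw [hc₁, ← Int.cast_abs]
              exact_mod_cast h.le
            calc (1:ℝ)/4096 = (16:ℝ)^l * wd (l+1) := (pw5 l).symm
              _ ≤ |c₁| * wd (l+1) := by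
                  apply mul_le_mul_of_nonneg_right hcast (wd_pos (l+1)).le
          · right
            have hcast : (4:ℝ)^l ≤ |c₂| := by
              rw [hc₂, ← Int.cast_abs]
              exact_mod_cast h.le
            calc (1:ℝ)/64 = (4:ℝ)^l * ht (l+1) := (pw6 l).symm
              _ ≤ |c₂| * ht (l+1) := by
                  apply mul_le_mul_of_nonneg_right hcast (ht_pos (l+1)).le
        -- abbreviations
        set LO : ℝ := lov θ₁ θ₂ l (cor θ₁ θ₂ l) with hLO
        set vc : ℝ := vcv θ₁ θ₂ l with hvc
        set V : ℝ := |c₁| * wd l + |c₂| * ht l with hV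
        have hVb : V ≤ 5/16 := by
          rw [hV]
          have b1 : |c₁| * wd l ≤ (16:ℝ)^(l+1) * wd l :=
            mul_le_mul_of_nonneg_right hc₁b (wd_pos l).le
          have b2 : |c₂| * ht l ≤ (4:ℝ)^(l+1) * ht l :=
            mul_le_mul_of_nonneg_right hc₂b (ht_pos l).le
          rw [pw3] at b1; rw [pw4] at b2
          linarith
        have hvcb : vc ≤ 17/256 := by
          rw [hvc, vcv, ← hc₁, ← hc₂]
          have b1 : |c₁| * wd (l+1) ≤ (16:ℝ)^(l+1) * wd (l+1) :=
            mul_le_mul_of_nonneg_right hc₁b (wd_pos (l+1)).le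
          have b2 : |c₂| * ht (l+1) ≤ (4:ℝ)^(l+1) * ht (l+1) :=
            mul_le_mul_of_nonneg_right hc₂b (ht_pos (l+1)).le
          rw [pw1] at b1; rw [pw2] at b2
          linarith
        have hVvc : V = 16 * (|c₁| * wd (l+1)) + 4 * (|c₂| * ht (l+1)) := by
          rw [hV, wd_succ l, ht_succ l]; ring
        have hvceq : vc = |c₁| * wd (l+1) + |c₂| * ht (l+1) := by
          rw [hvc, vcv, ← hc₁, ← hc₂]
        have hslack : 2 * del ≤ V - 2 * vc := by
          have p1 : (0:ℝ) ≤ |c₁| * wd (l+1) := mul_nonneg habs1 (wd_pos _).le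
          have p2 : (0:ℝ) ≤ |c₂| * ht (l+1) := mul_nonneg habs2 (ht_pos _).le
          have hd' : del ≤ 1/16384 := by rw [show del = ((2:ℝ)^14)⁻¹ from rfl]; norm_num
          rcases hbig with h | h <;> rw [hVvc, hvceq] <;> nlinarith
        have hdelval : del = ((2:ℝ)^14)⁻¹ := rfl
        -- value of φ on the chosen subcell
        have hwle := wd_antitone l
        have hhle := ht_antitone l
        intro n
        by_cases hP : ∀ n : ℤ, (n:ℝ) ≤ lov θ₁ θ₂ l (cor θ₁ θ₂ l) - del ∨
            lov θ₁ θ₂ l (cor θ₁ θ₂ l) + vcv θ₁ θ₂ l + del ≤ (n:ℝ)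
        · rw [if_pos hP] at hx1 hx2 hy1 hy2
          simp only at hx1 hx2 hy1 hy2
          have s1 := seg_low (wd_pos (l+1)).le hwle hx1 hx2
          have s2 := seg_low (ht_pos (l+1)).le hhle hy1 hy2
          have hlov : LO = min (c₁*a) (c₁*(a + wd l)) + min (c₂*b) (c₂*(b + ht l)) := by
            rw [hLO, lov, ← hc₁, ← hc₂, ← ha, ← hb]
          have hphi1 : LO ≤ c₁ * x + c₂ * y := by rw [hlov]; linarith [s1.1, s2.1]
          have hphi2 : c₁ * x + c₂ * y ≤ LO + vc := by
            rw [hlov, hvceq]; linarith [s1.2, s2.2]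
          rcases hP n with hn | hn
          · rw [le_abs]; left
            rw [← hLO] at hn
            linarith
          · rw [le_abs]; right
            rw [← hLO, ← hvc] at hn
            linarith
        · rw [if_neg hP] at hx1 hx2 hy1 hy2
          simp only at hx1 hx2 hy1 hy2
          push_neg at hP
          obtain ⟨n₀, hn₀⟩ := hP
          rw [← hLO, ← hvc] at hn₀
          obtain ⟨hn₀1, hn₀2⟩ := hn₀
          have s1 := seg_high (wd_pos (l+1)).le hwle hx1 hx2
          have s2 := seg_high (ht_pos (l+1)).le hhle hy1 hy2
          have hmaxmin1 : max (c₁*a) (c₁*(a + wd l)) = min (c₁*a) (c₁*(a + wd l)) + |c₁| * wd l := by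
            have := max_sub_min_eq_abs (c₁*a) (c₁*(a + wd l))
            have e : |c₁*(a + wd l) - c₁*a| = |c₁| * wd l := by
              rw [show c₁*(a + wd l) - c₁*a = c₁ * wd l by ring, abs_mul,
                abs_of_pos (wd_pos l)]
            linarith [this, e.symm.le]
          have hmaxmin2 : max (c₂*b) (c₂*(b + ht l)) = min (c₂*b) (c₂*(b + ht l)) + |c₂| * ht l := by
            have := max_sub_min_eq_abs (c₂*b) (c₂*(b + ht l))
            have e : |c₂*(b + ht l) - c₂*b| = |c₂| * ht l := by
              rw [show c₂*(b + ht l) - c₂*b = c₂ * ht l by ring, abs_mul,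
                abs_of_pos (ht_pos l)]
            linarith [this, e.symm.le]
          have hlov : LO = min (c₁*a) (c₁*(a + wd l)) + min (c₂*b) (c₂*(b + ht l)) := by
            rw [hLO, lov, ← hc₁, ← hc₂, ← ha, ← hb]
          have hphi1 : LO + V - vc ≤ c₁ * x + c₂ * y := by
            rw [hlov, hV, hvceq]
            linarith [s1.1, s2.1, hmaxmin1, hmaxmin2]
          have hphi2 : c₁ * x + c₂ * y ≤ LO + V := by
            rw [hlov, hV]
            linarith [s1.2, s2.2, hmaxmin1, hmaxmin2]
          rcases (by omega : n ≤ n₀ - 1 ∨ n = n₀ ∨ n₀ + 1 ≤ n) with hcmp | hcmp | hcmp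
          · rw [le_abs]; left
            have : (n:ℝ) ≤ (n₀:ℝ) - 1 := by exact_mod_cast Int.le_sub_one_iff.mpr (by omega)
            have hd0 := del_pos
            linarith
          · subst hcmp
            rw [le_abs]; left
            linarith
          · rw [le_abs]; right
            have hcast : (n₀:ℝ) + 1 ≤ (n:ℝ) := by exact_mod_cast hcmp
            have hdsmall : del ≤ 1/16 := by
              rw [show del = ((2:ℝ)^14)⁻¹ from rfl]; norm_num
            linarith

noncomputable def eta1 (θ₁ θ₂ : ℝ) : ℝ := ⨆ l, (cor θ₁ θ₂ l).1
noncomputable def eta2 (θ₁ θ₂ : ℝ) : ℝ := ⨆ l, (cor θ₁ θ₂ l).2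

lemma eta_mem (θ₁ θ₂ : ℝ) (l : ℕ) :
    (cor θ₁ θ₂ l).1 ≤ eta1 θ₁ θ₂ ∧ eta1 θ₁ θ₂ ≤ (cor θ₁ θ₂ l).1 + wd l ∧
    (cor θ₁ θ₂ l).2 ≤ eta2 θ₁ θ₂ ∧ eta2 θ₁ θ₂ ≤ (cor θ₁ θ₂ l).2 + ht l := by
  have hb1 : BddAbove (Set.range fun l => (cor θ₁ θ₂ l).1) := by
    refine ⟨(cor θ₁ θ₂ 0).1 + wd 0, ?_⟩
    rintro z ⟨k, rfl⟩
    have := (cor_mono θ₁ θ₂ (Nat.zero_le k)).2.1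
    have := wd_pos k
    simp only
    linarith
  have hb2 : BddAbove (Set.range fun l => (cor θ₁ θ₂ l).2) := by
    refine ⟨(cor θ₁ θ₂ 0).2 + ht 0, ?_⟩
    rintro z ⟨k, rfl⟩
    have := (cor_mono θ₁ θ₂ (Nat.zero_le k)).2.2.2
    have := ht_pos k
    simp only
    linarith
  refine ⟨le_ciSup hb1 l, ?_, le_ciSup hb2 l, ?_⟩
  · apply ciSup_le
    intro k
    rcases le_total k l with h | h
    · have := (cor_mono θ₁ θ₂ h).1
      have := wd_pos l
      linarith
    · have := (cor_mono θ₁ θ₂ h).2.1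
      have := wd_pos k
      linarith
  · apply ciSup_le
    intro k
    rcases le_total k l with h | h
    · have := (cor_mono θ₁ θ₂ h).2.2.1
      have := ht_pos l
      linarith
    · have := (cor_mono θ₁ θ₂ h).2.2.2
      have := ht_pos k
      linarith

lemma eta_safe (θ₁ θ₂ : ℝ) (j : ℕ) (n : ℤ) :
    del ≤ |((mm θ₁ θ₂ j).1 : ℝ) * eta1 θ₁ θ₂ + ((mm θ₁ θ₂ j).2 : ℝ) * eta2 θ₁ θ₂ - n| := by
  obtain ⟨h1, h2, h3, h4⟩ := eta_mem θ₁ θ₂ j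
  exact cor_safe θ₁ θ₂ j j le_rfl _ _ h1 h2 h3 h4 n

lemma rpow_23 (k : ℕ) : ((64:ℝ)^k) ^ ((2:ℝ)/3) = 16^k := by
  rw [show (64:ℝ) = 2^6 by norm_num, ← pow_mul,
    ← Real.rpow_natCast 2 (6*k), ← Real.rpow_mul (by norm_num : (0:ℝ) ≤ 2),
    show ((6*k : ℕ):ℝ) * (2/3) = ((4*k : ℕ):ℝ) by push_cast; ring,
    Real.rpow_natCast, show (16:ℝ) = 2^4 by norm_num, ← pow_mul]

lemma rpow_13 (k : ℕ) : ((64:ℝ)^k) ^ ((1:ℝ)/3) = 4^k := by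
  rw [show (64:ℝ) = 2^6 by norm_num, ← pow_mul,
    ← Real.rpow_natCast 2 (6*k), ← Real.rpow_mul (by norm_num : (0:ℝ) ≤ 2),
    show ((6*k : ℕ):ℝ) * (1/3) = ((2*k : ℕ):ℝ) by push_cast; ring,
    Real.rpow_natCast, show (4:ℝ) = 2^2 by norm_num, ← pow_mul]

lemma h6423 : (64:ℝ) ^ ((2:ℝ)/3) = 16 := by
  have := rpow_23 1
  simpa using this

lemma h6413 : (64:ℝ) ^ ((1:ℝ)/3) = 4 := by
  have := rpow_13 1
  simpa using this


/-- For any `Θ = (θ₁, θ₂)`, `BAD^Θ(2/3,1/3)` is non-empty. -/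
theorem stmt_0 (θ₁ θ₂ : ℝ) : ∃ η₁ η₂ : ℝ, BADT θ₁ θ₂ η₁ η₂ := by
  classical
  set η₁ := eta1 θ₁ θ₂ with hη₁
  set η₂ := eta2 θ₁ θ₂ with hη₂
  refine ⟨η₁, η₂, del / (40 * (2/del) ^ ((2:ℝ)/3)), ?_, ?_⟩
  · have := del_pos
    have h2d : (0:ℝ) < 2/del := by positivity
    have := Real.rpow_pos_of_pos h2d ((2:ℝ)/3)
    positivity
  · intro q hq
    have hdel := del_pos
    have hq1 : (1:ℝ) ≤ (q:ℝ) := by exact_mod_cast hq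
    set A₁ := dni ((q:ℝ) * θ₁ - η₁) with hA₁
    set A₂ := dni ((q:ℝ) * θ₂ - η₂) with hA₂
    set M := max ((q : ℝ) ^ ((2 : ℝ) / 3) * A₁) ((q : ℝ) ^ ((1 : ℝ) / 3) * A₂) with hM
    have hA₁0 : 0 ≤ A₁ := dni_nonneg _
    have hA₂0 : 0 ≤ A₂ := dni_nonneg _
    have hM0 : 0 ≤ M := le_trans (by positivity) (le_max_left _ _)
    -- find minimal k
    have H : ∃ k : ℕ, 2*(q:ℝ) ≤ del * 64^k := by
      obtain ⟨k₀, hk₀⟩ := pow_unbounded_of_one_lt (2*(q:ℝ)/del) (by norm_num : (1:ℝ) < 64)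
      refine ⟨k₀, ?_⟩
      rw [div_lt_iff₀ hdel] at hk₀
      linarith
    set k := Nat.find H with hkdef
    have hk : 2*(q:ℝ) ≤ del * 64^k := Nat.find_spec H
    have hkpos : k ≠ 0 := by
      intro h0
      have := hk
      rw [h0] at this
      simp at this
      have hdel1 : del ≤ 1 := by rw [del]; norm_num
      linarith
    obtain ⟨j, hjk⟩ : ∃ j, k = j + 1 := ⟨k - 1, by omega⟩
    have hkmin : ¬(2*(q:ℝ) ≤ del * 64^j) := by
      have hjlt : j < k := by omega
      rw [hkdef] at hjlt
      exact Nat.find_min H hjlt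
    push_neg at hkmin
    -- transference
    set m := mm θ₁ θ₂ k with hm
    set c₁ : ℝ := ((m.1 : ℤ) : ℝ) with hc₁
    set c₂ : ℝ := ((m.2 : ℤ) : ℝ) with hc₂
    set r₁ := round ((q:ℝ) * θ₁ - η₁) with hr₁
    set r₂ := round ((q:ℝ) * θ₂ - η₂) with hr₂
    set p := round (lf θ₁ θ₂ m) with hp
    have hsafe := eta_safe θ₁ θ₂ k ((q:ℤ)*p - m.1*r₁ - m.2*r₂)
    have heq : c₁ * η₁ + c₂ * η₂ - (((q:ℤ)*p - m.1*r₁ - m.2*r₂ : ℤ) : ℝ)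
        = -(c₁ * (((q:ℝ)*θ₁ - η₁) - r₁) + c₂ * (((q:ℝ)*θ₂ - η₂) - r₂)
            - (q:ℝ) * (lf θ₁ θ₂ m - p)) := by
      rw [lf, hc₁, hc₂]
      push_cast
      ring
    have htri : del ≤ |c₁| * A₁ + |c₂| * A₂ + (q:ℝ) * dni (lf θ₁ θ₂ m) := by
      have h1 : del ≤ |c₁ * (((q:ℝ)*θ₁ - η₁) - r₁) + c₂ * (((q:ℝ)*θ₂ - η₂) - r₂)
          - (q:ℝ) * (lf θ₁ θ₂ m - p)| := by
        rw [← abs_neg, ← heq]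
        exact hsafe
      calc del ≤ _ := h1
        _ ≤ |c₁ * (((q:ℝ)*θ₁ - η₁) - r₁)| + |c₂ * (((q:ℝ)*θ₂ - η₂) - r₂)|
            + |(q:ℝ) * (lf θ₁ θ₂ m - p)| := by
            have t1 := abs_add_le (c₁ * (((q:ℝ)*θ₁ - η₁) - r₁) + c₂ * (((q:ℝ)*θ₂ - η₂) - r₂))
              (-((q:ℝ) * (lf θ₁ θ₂ m - p)))
            have t2 := abs_add_le (c₁ * (((q:ℝ)*θ₁ - η₁) - r₁)) (c₂ * (((q:ℝ)*θ₂ - η₂) - r₂))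
            rw [abs_neg] at t1
            calc |c₁ * (((q:ℝ)*θ₁ - η₁) - r₁) + c₂ * (((q:ℝ)*θ₂ - η₂) - r₂)
                - (q:ℝ) * (lf θ₁ θ₂ m - p)|
                = |c₁ * (((q:ℝ)*θ₁ - η₁) - r₁) + c₂ * (((q:ℝ)*θ₂ - η₂) - r₂)
                  + -((q:ℝ) * (lf θ₁ θ₂ m - p))| := by ring_nf
              _ ≤ _ := by linarith
        _ = |c₁| * A₁ + |c₂| * A₂ + (q:ℝ) * dni (lf θ₁ θ₂ m) := by
            rw [abs_mul, abs_mul, abs_mul, abs_of_nonneg (by positivity : (0:ℝ) ≤ (q:ℝ))]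
            rw [hA₁, hA₂, dni, dni, dni, ← hr₁, ← hr₂, ← hp]
    have hsm : (q:ℝ) * dni (lf θ₁ θ₂ m) ≤ del / 2 := by
      have h64 : (0:ℝ) < (64:ℝ)^k := by positivity
      have := mm_small θ₁ θ₂ k
      rw [← hm] at this
      calc (q:ℝ) * dni (lf θ₁ θ₂ m) ≤ (q:ℝ) * ((64:ℝ)^k)⁻¹ := by
            apply mul_le_mul_of_nonneg_left this (by positivity)
        _ ≤ del / 2 := by
            rw [mul_inv_le_iff₀ h64]
            linarith
    have hcb := mm_bounds θ₁ θ₂ k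
    have hc₁b : |c₁| ≤ (16:ℝ)^k := by
      rw [hc₁, ← Int.cast_abs]
      exact_mod_cast hcb.1
    have hc₂b : |c₂| ≤ (4:ℝ)^k := by
      rw [hc₂, ← Int.cast_abs]
      exact_mod_cast hcb.2
    have hstep1 : del / 2 ≤ (16:ℝ)^k * A₁ + (4:ℝ)^k * A₂ := by
      have b1 : |c₁| * A₁ ≤ (16:ℝ)^k * A₁ := mul_le_mul_of_nonneg_right hc₁b hA₁0
      have b2 : |c₂| * A₂ ≤ (4:ℝ)^k * A₂ := mul_le_mul_of_nonneg_right hc₂b hA₂0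
      linarith
    -- rpow estimates
    set X := 2*(q:ℝ)/del with hX
    have hX1 : (1:ℝ) ≤ X := by
      rw [hX, le_div_iff₀ hdel]
      have hdel1 : del ≤ 1 := by rw [del]; norm_num
      nlinarith
    have hX0 : (0:ℝ) ≤ X := by linarith
    have h64X : (64:ℝ)^k ≤ 64 * X := by
      have : (64:ℝ)^j < X := by
        rw [hX, lt_div_iff₀ hdel]
        calc (64:ℝ)^j * del = del * 64^j := by ring
          _ < 2*(q:ℝ) := hkmin
      calc (64:ℝ)^k = 64 * (64:ℝ)^j := by rw [hjk]; ring
        _ ≤ 64 * X := by linarith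
    have b16 : (16:ℝ)^k ≤ 16 * X ^ ((2:ℝ)/3) := by
      calc (16:ℝ)^k = ((64:ℝ)^k) ^ ((2:ℝ)/3) := (rpow_23 k).symm
        _ ≤ (64 * X) ^ ((2:ℝ)/3) :=
            Real.rpow_le_rpow (by positivity) h64X (by norm_num)
        _ = (64:ℝ) ^ ((2:ℝ)/3) * X ^ ((2:ℝ)/3) := Real.mul_rpow (by norm_num) hX0
        _ = 16 * X ^ ((2:ℝ)/3) := by rw [h6423]
    have b4 : (4:ℝ)^k ≤ 4 * X ^ ((1:ℝ)/3) := by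
      calc (4:ℝ)^k = ((64:ℝ)^k) ^ ((1:ℝ)/3) := (rpow_13 k).symm
        _ ≤ (64 * X) ^ ((1:ℝ)/3) :=
            Real.rpow_le_rpow (by positivity) h64X (by norm_num)
        _ = (64:ℝ) ^ ((1:ℝ)/3) * X ^ ((1:ℝ)/3) := Real.mul_rpow (by norm_num) hX0
        _ = 4 * X ^ ((1:ℝ)/3) := by rw [h6413]
    have hXsplit2 : X ^ ((2:ℝ)/3) = (2/del) ^ ((2:ℝ)/3) * (q:ℝ) ^ ((2:ℝ)/3) := by
      rw [hX, show 2*(q:ℝ)/del = (2/del) * (q:ℝ) by ring]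
      exact Real.mul_rpow (by positivity) (by positivity)
    have hXsplit1 : X ^ ((1:ℝ)/3) = (2/del) ^ ((1:ℝ)/3) * (q:ℝ) ^ ((1:ℝ)/3) := by
      rw [hX, show 2*(q:ℝ)/del = (2/del) * (q:ℝ) by ring]
      exact Real.mul_rpow (by positivity) (by positivity)
    set Y := (2/del) ^ ((2:ℝ)/3) with hY
    have hY0 : 0 < Y := Real.rpow_pos_of_pos (by positivity) _
    have hY13 : (2/del) ^ ((1:ℝ)/3) ≤ Y := by
      rw [hY]
      apply Real.rpow_le_rpow_of_exponent_le
      · rw [le_div_iff₀ hdel]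
        have hdel1 : del ≤ 1 := by rw [del]; norm_num
        linarith
      · norm_num
    have hfinal : del / 2 ≤ 20 * (Y * M) := by
      have m1 : (q:ℝ) ^ ((2:ℝ)/3) * A₁ ≤ M := le_max_left _ _
      have m2 : (q:ℝ) ^ ((1:ℝ)/3) * A₂ ≤ M := le_max_right _ _
      have q23 : (0:ℝ) ≤ (q:ℝ) ^ ((2:ℝ)/3) := by positivity
      have q13 : (0:ℝ) ≤ (q:ℝ) ^ ((1:ℝ)/3) := by positivity
      have t1 : (16:ℝ)^k * A₁ ≤ 16 * Y * ((q:ℝ) ^ ((2:ℝ)/3) * A₁) := by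
        calc (16:ℝ)^k * A₁ ≤ (16 * X ^ ((2:ℝ)/3)) * A₁ :=
              mul_le_mul_of_nonneg_right b16 hA₁0
          _ = 16 * Y * ((q:ℝ) ^ ((2:ℝ)/3) * A₁) := by rw [hXsplit2]; ring
      have t2 : (4:ℝ)^k * A₂ ≤ 4 * Y * ((q:ℝ) ^ ((1:ℝ)/3) * A₂) := by
        calc (4:ℝ)^k * A₂ ≤ (4 * X ^ ((1:ℝ)/3)) * A₂ :=
              mul_le_mul_of_nonneg_right b4 hA₂0
          _ = 4 * (2/del) ^ ((1:ℝ)/3) * ((q:ℝ) ^ ((1:ℝ)/3) * A₂) := by rw [hXsplit1]; ring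
          _ ≤ 4 * Y * ((q:ℝ) ^ ((1:ℝ)/3) * A₂) := by
              apply mul_le_mul_of_nonneg_right _ (by positivity)
              linarith
      have t3 : 16 * Y * ((q:ℝ) ^ ((2:ℝ)/3) * A₁) ≤ 16 * Y * M :=
        mul_le_mul_of_nonneg_left m1 (by positivity)
      have t4 : 4 * Y * ((q:ℝ) ^ ((1:ℝ)/3) * A₂) ≤ 4 * Y * M :=
        mul_le_mul_of_nonneg_left m2 (by positivity)
      linarith
    rw [div_le_iff₀ (by positivity : (0:ℝ) < 40 * Y)]
    calc del ≤ 40 * (Y * M) := by linarith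
      _ = M * (40 * Y) := by ring
end

section
/- Let 1, θ₁, θ₂ be linearly independent over ℚ and let (m_ν)_{ν≥1} be the sequence of best approximation vectors ordered so that M_ν = √(max(|m_{ν,1}|, |m_{ν,2}|²)) is strictly increasing. Then for every ν, ζ_ν · M_{ν+1}³ ≤ 1, where ζ_ν = ‖θ₁ m_{ν,1} + θ₂ m_{ν,2}‖. -/
open scoped BigOperators

section StmtTwoAux

lemma dni_half (x : ℝ) : dni x ≤ 1/2 := abs_sub_round x

lemma dni_add_int (x : ℝ) (n : ℤ) : dni (x + n) = dni x := by
  unfold dni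
  rw [round_add_intCast]
  push_cast
  ring_nf

lemma dni_neg (x : ℝ) : dni (-x) = dni x := by
  apply le_antisymm
  · calc dni (-x) ≤ |(-x) - ((-(round x) : ℤ) : ℝ)| := dni_le _ _
      _ = dni x := by push_cast; rw [dni, abs_sub_comm]; ring_nf
  · calc dni x ≤ |x - ((-(round (-x)) : ℤ) : ℝ)| := dni_le _ _
      _ = dni (-x) := by push_cast; rw [dni, abs_sub_comm]; ring_nf

lemma zeta_neg (θ₁ θ₂ : ℝ) (p : ℤ × ℤ) : zeta θ₁ θ₂ (-p) = zeta θ₁ θ₂ p := by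
  unfold zeta
  rw [show θ₁ * ((-p).1 : ℝ) + θ₂ * ((-p).2 : ℝ) = -(θ₁ * p.1 + θ₂ * p.2) by
    simp only [Prod.fst_neg, Prod.snd_neg]; push_cast; ring]
  exact dni_neg _

lemma wsize_neg (p : ℤ × ℤ) : wsize (-p) = wsize p := by
  unfold wsize
  simp only [Prod.fst_neg, Prod.snd_neg]
  push_cast
  rw [abs_neg, neg_pow]
  ring_nf

lemma wsize_nonneg (p : ℤ × ℤ) : 0 ≤ wsize p :=
  le_trans (abs_nonneg _) (le_max_left _ _)

lemma wsize_lt_of_Mval_lt {p q : ℤ × ℤ} (h : Mval p < Mval q) : wsize p < wsize q := by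
  by_contra hc
  push_neg at hc
  exact absurd (Real.sqrt_le_sqrt hc) (not_le.2 h)

lemma Mval_lt_Mval {p q : ℤ × ℤ} (h : wsize p < wsize q) : Mval p < Mval q :=
  Real.sqrt_lt_sqrt (wsize_nonneg p) h


lemma best_x0 {θ₁ θ₂ : ℝ} (h : LinIndep θ₁ θ₂) (z : ℤ × ℤ) (hz : z ≠ 0) (x₀ : ℤ)
    (he : |(x₀ : ℝ) + θ₁ * z.1 + θ₂ * z.2| = zeta θ₁ θ₂ z) :
    x₀ = -round (θ₁ * (z.1 : ℝ) + θ₂ * z.2) := by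
  set t : ℝ := θ₁ * (z.1 : ℝ) + θ₂ * z.2 with ht
  have he' : |(x₀ : ℝ) + t| = |t - round t| := by
    have h0 : zeta θ₁ θ₂ z = |t - round t| := rfl
    rw [← h0, ← he]; congr 1; ring
  rcases abs_eq_abs.1 he' with h1 | h2
  · have : (x₀ : ℝ) = ((-round t : ℤ) : ℝ) := by push_cast; linarith
    exact_mod_cast this
  · exfalso
    have hlin := h (x₀ - round t) (2 * z.1) (2 * z.2)
      (by push_cast; rw [ht] at h2; linarith)
    obtain ⟨e1, e2, e3⟩ := hlin
    exact hz (Prod.ext (by simp; omega) (by simp; omega))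

lemma zeta_eq_cases {θ₁ θ₂ : ℝ} (h : LinIndep θ₁ θ₂) (z w : ℤ × ℤ)
    (he : zeta θ₁ θ₂ z = zeta θ₁ θ₂ w) :
    (z = w ∧ round (θ₁ * (z.1 : ℝ) + θ₂ * z.2) = round (θ₁ * (w.1 : ℝ) + θ₂ * w.2)) ∨
    (z = -w ∧ round (θ₁ * (z.1 : ℝ) + θ₂ * z.2) = -round (θ₁ * (w.1 : ℝ) + θ₂ * w.2)) := by
  set t : ℝ := θ₁ * (z.1 : ℝ) + θ₂ * z.2 with ht
  set s : ℝ := θ₁ * (w.1 : ℝ) + θ₂ * w.2 with hs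
  have he' : |t - round t| = |s - round s| := he
  rcases abs_eq_abs.1 he' with h1 | h2
  · left
    have hlin := h (round s - round t) (z.1 - w.1) (z.2 - w.2)
      (by push_cast; rw [ht] at h1; rw [hs] at h1; linarith)
    obtain ⟨e1, e2, e3⟩ := hlin
    refine ⟨Prod.ext (by omega) (by omega), by omega⟩
  · right
    have hlin := h (-(round t + round s)) (z.1 + w.1) (z.2 + w.2)
      (by push_cast; rw [ht] at h2; rw [hs] at h2; linarith)
    obtain ⟨e1, e2, e3⟩ := hlin
    refine ⟨Prod.ext (by simp; omega) (by simp; omega), by omega⟩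


lemma pigeon (θ₁ θ₂ : ℝ) (a₁ a₂ : ℤ) (ha₁ : 1 ≤ a₁) (ha₂ : 0 ≤ a₂) :
    ∃ r : ℤ × ℤ, r ≠ 0 ∧ |r.1| ≤ a₁ ∧ |r.2| ≤ a₂ ∧
      zeta θ₁ θ₂ r ≤ 1 / (((a₁ + 1) * (a₂ + 1) : ℤ) : ℝ) := by
  classical
  set D : Finset (ℤ × ℤ) := Finset.Icc 0 a₁ ×ˢ Finset.Icc 0 a₂ with hD
  have hcardD : (D.card : ℤ) = (a₁ + 1) * (a₂ + 1) := by
    rw [hD, Finset.card_product]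
    push_cast
    rw [Int.card_Icc_of_le _ _ (by omega), Int.card_Icc_of_le _ _ (by omega)]
    ring
  set n : ℕ := D.card with hn
  have hn2 : 2 ≤ (n : ℤ) := by rw [hcardD]; nlinarith
  have hnR : (0 : ℝ) < (n : ℝ) := by exact_mod_cast by omega
  set f : ℤ × ℤ → ℤ := fun p =>
    if p.1 < 0 then (n : ℤ) - 1 else ⌊(n : ℝ) * Int.fract (θ₁ * p.1 + θ₂ * p.2)⌋ with hf
  have hmemD : ∀ p : ℤ × ℤ, p ∈ D ↔ (0 ≤ p.1 ∧ p.1 ≤ a₁ ∧ 0 ≤ p.2 ∧ p.2 ≤ a₂) := by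
    intro p
    rw [hD, Finset.mem_product, Finset.mem_Icc, Finset.mem_Icc]
    tauto
  have hfD : ∀ p ∈ D, f p = ⌊(n : ℝ) * Int.fract (θ₁ * p.1 + θ₂ * p.2)⌋ := by
    intro p hp
    have := (hmemD p).1 hp
    rw [hf]
    simp only [if_neg (by omega : ¬ p.1 < 0)]
  have hsnot : ((-1, 0) : ℤ × ℤ) ∉ D := by rw [hmemD]; omega
  have hmaps : ∀ p ∈ insert ((-1, 0) : ℤ × ℤ) D, f p ∈ Finset.Ico (0 : ℤ) (n : ℤ) := by
    intro p hp
    rw [Finset.mem_Ico]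
    rcases Finset.mem_insert.1 hp with rfl | hpD
    · rw [hf]; simp only [if_pos (by norm_num : ((-1, 0) : ℤ × ℤ).1 < 0)]; omega
    · rw [hfD p hpD]
      constructor
      · exact Int.floor_nonneg.2 (mul_nonneg hnR.le (Int.fract_nonneg _))
      · rw [Int.floor_lt]
        push_cast
        calc (n : ℝ) * Int.fract (θ₁ * p.1 + θ₂ * p.2) < (n : ℝ) * 1 := by
              exact mul_lt_mul_of_pos_left (Int.fract_lt_one _) hnR
          _ = (n : ℝ) := by ring
  have hcard : (Finset.Ico (0 : ℤ) (n : ℤ)).card < (insert ((-1, 0) : ℤ × ℤ) D).card := by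
    rw [Finset.card_insert_of_notMem hsnot, Int.card_Ico]
    simp [hn]
  obtain ⟨p, hp, q, hq, hpq, hfeq⟩ :=
    Finset.exists_ne_map_eq_of_card_lt_of_maps_to hcard hmaps
  -- helper: a point of D with f-value n-1 works
  have key1 : ∀ q ∈ D, f q = (n : ℤ) - 1 → ∃ r : ℤ × ℤ, r ≠ 0 ∧ |r.1| ≤ a₁ ∧ |r.2| ≤ a₂ ∧
      zeta θ₁ θ₂ r ≤ 1 / (((a₁ + 1) * (a₂ + 1) : ℤ) : ℝ) := by
    intro q hqD hfq
    set t : ℝ := θ₁ * q.1 + θ₂ * q.2 with htdef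
    have hb := (hmemD q).1 hqD
    rw [hfD q hqD] at hfq
    have hfr : (n : ℝ) - 1 ≤ (n : ℝ) * Int.fract t := by
      have := Int.le_floor.1 hfq.ge
      push_cast at this
      linarith
    have hq0 : q ≠ 0 := by
      rintro rfl
      simp only [Prod.fst_zero, Prod.snd_zero, Int.cast_zero, mul_zero, add_zero,
        Int.fract_zero, mul_zero, Int.floor_zero] at hfq hfr
      omega
    refine ⟨q, hq0, by rw [abs_le]; omega, by rw [abs_le]; omega, ?_⟩
    have h1 : zeta θ₁ θ₂ q = dni (Int.fract t) := by
      have he : θ₁ * (q.1 : ℝ) + θ₂ * q.2 = Int.fract t + (⌊t⌋ : ℤ) := by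
        rw [Int.fract, htdef]; ring
      rw [zeta, he, dni_add_int]
    rw [h1, ← hcardD]
    calc dni (Int.fract t) ≤ |Int.fract t - ((1 : ℤ) : ℝ)| := dni_le _ _
      _ = 1 - Int.fract t := by
          rw [abs_sub_comm, abs_of_nonneg (by push_cast; linarith [Int.fract_lt_one t])]
          push_cast; ring
      _ ≤ 1 / (n : ℝ) := by
          rw [le_div_iff₀ hnR]
          nlinarith [Int.fract_lt_one t]
  rcases Finset.mem_insert.1 hp with hp1 | hpD
  · rcases Finset.mem_insert.1 hq with hq1 | hqD
    · exact absurd (hp1.trans hq1.symm) hpq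
    · apply key1 q hqD
      rw [← hfeq, hp1, hf]
      simp only [if_pos (by norm_num : ((-1, 0) : ℤ × ℤ).1 < 0)]
  · rcases Finset.mem_insert.1 hq with hq1 | hqD
    · apply key1 p hpD
      rw [hfeq, hq1, hf]
      simp only [if_pos (by norm_num : ((-1, 0) : ℤ × ℤ).1 < 0)]
    · -- both in D : take the difference
      set tp : ℝ := θ₁ * p.1 + θ₂ * p.2 with htp
      set tq : ℝ := θ₁ * q.1 + θ₂ * q.2 with htq
      have hbp := (hmemD p).1 hpD
      have hbq := (hmemD q).1 hqD
      rw [hfD p hpD, hfD q hqD] at hfeq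
      have hlt : |Int.fract tp - Int.fract tq| ≤ 1 / (n : ℝ) := by
        rw [abs_le]
        have h1 := Int.floor_le ((n : ℝ) * Int.fract tp)
        have h2 := Int.lt_floor_add_one ((n : ℝ) * Int.fract tp)
        have h3 := Int.floor_le ((n : ℝ) * Int.fract tq)
        have h4 := Int.lt_floor_add_one ((n : ℝ) * Int.fract tq)
        rw [hfeq] at h1 h2
        constructor
        · rw [neg_le, ← sub_nonneg]
          have : (n : ℝ) * Int.fract tq - (n : ℝ) * Int.fract tp ≤ 1 := by linarith
          rw [div_sub' (ne_of_gt hnR), le_div_iff₀ hnR] -- might fail; fallback below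
          nlinarith
        · rw [← sub_nonneg]
          rw [div_sub' (ne_of_gt hnR), le_div_iff₀ hnR]
          nlinarith
      refine ⟨p - q, sub_ne_zero.2 hpq, ?_, ?_, ?_⟩
      · simp only [Prod.fst_sub]; rw [abs_le]; omega
      · simp only [Prod.snd_sub]; rw [abs_le]; omega
      · have h1 : zeta θ₁ θ₂ (p - q) = dni (Int.fract tp - Int.fract tq) := by
          rw [zeta]
          have : θ₁ * ((p - q).1 : ℝ) + θ₂ * ((p - q).2 : ℝ)
              = (Int.fract tp - Int.fract tq) + ((⌊tp⌋ - ⌊tq⌋ : ℤ) : ℝ) := by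
            simp only [Prod.fst_sub, Prod.snd_sub, Int.fract]
            push_cast
            rw [htp, htq]
            ring
          rw [this, dni_add_int]
        rw [h1, ← hcardD]
        calc dni (Int.fract tp - Int.fract tq)
            ≤ |Int.fract tp - Int.fract tq - ((0 : ℤ) : ℝ)| := dni_le _ _
          _ = |Int.fract tp - Int.fract tq| := by push_cast; ring_nf
          _ ≤ 1 / (n : ℝ) := hlt


lemma sq_le_self_bound {a B : ℤ} (h : a ^ 2 ≤ B) : -B ≤ a ∧ a ≤ B := by
  constructor <;> nlinarith [sq_nonneg (a - 1), sq_nonneg (a + 1), sq_nonneg a]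

lemma exists_best (θ₁ θ₂ : ℝ) (h : LinIndep θ₁ θ₂) (B : ℤ) (r : ℤ × ℤ) (hr : r ≠ 0)
    (hr1 : |r.1| ≤ B) (hr2 : r.2 ^ 2 ≤ B) :
    ∃ y : ℤ × ℤ, IsBestApprox θ₁ θ₂ y ∧ |y.1| ≤ B ∧ y.2 ^ 2 ≤ B ∧
      zeta θ₁ θ₂ y ≤ zeta θ₁ θ₂ r := by
  classical
  set S : Finset (ℤ × ℤ) :=
    (Finset.Icc (-B) B ×ˢ Finset.Icc (-B) B).filter (fun y => y ≠ 0 ∧ y.2 ^ 2 ≤ B) with hS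
  have hmem : ∀ y : ℤ × ℤ, y ∈ S ↔ (y ≠ 0 ∧ |y.1| ≤ B ∧ y.2 ^ 2 ≤ B) := by
    intro y
    rw [hS, Finset.mem_filter, Finset.mem_product, Finset.mem_Icc, Finset.mem_Icc]
    constructor
    · rintro ⟨⟨h1, h2⟩, h3, h4⟩
      exact ⟨h3, by rw [abs_le]; exact h1, h4⟩
    · rintro ⟨h1, h2, h3⟩
      have := sq_le_self_bound h3
      rw [abs_le] at h2
      exact ⟨⟨h2, this⟩, h1, h3⟩
  have hrS : r ∈ S := (hmem r).2 ⟨hr, hr1, hr2⟩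
  obtain ⟨y, hyS, hymin⟩ := S.exists_min_image (fun y => zeta θ₁ θ₂ y) ⟨r, hrS⟩
  obtain ⟨hy0, hy1, hy2⟩ := (hmem y).1 hyS
  have hwy : wsize y ≤ (B : ℝ) := by
    rw [wsize]
    apply max_le
    · exact_mod_cast (by exact_mod_cast hy1 : |(y.1 : ℝ)| ≤ (B : ℝ))
    · exact_mod_cast (by exact_mod_cast hy2 : ((y.2 : ℝ)) ^ 2 ≤ (B : ℝ))
  refine ⟨y, ⟨hy0, -round (θ₁ * (y.1 : ℝ) + θ₂ * y.2), ?_, ?_⟩, hy1, hy2, hymin r hrS⟩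
  · rw [zeta, dni]
    push_cast
    congr 1
    ring
  · intro x₀ x₁ x₂ hx hxz
    by_cases hz0 : x₁ = 0 ∧ x₂ = 0
    · left
      obtain ⟨e1, e2⟩ := hz0
      subst e1; subst e2
      have hx0 : |(x₀ : ℝ)| ≤ zeta θ₁ θ₂ y := by
        have : |(x₀ : ℝ) + θ₁ * ((0 : ℤ) : ℝ) + θ₂ * ((0 : ℤ) : ℝ)| = |(x₀ : ℝ)| := by
          push_cast; ring_nf
        rw [← this]
        exact hxz
      have : |(x₀ : ℝ)| < 1 := lt_of_le_of_lt (hx0.trans (dni_half _)) (by norm_num)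
      have h1 : |x₀| < 1 := by exact_mod_cast this
      rw [abs_lt] at h1
      have : x₀ = 0 := by omega
      simp [this]
    · set z : ℤ × ℤ := (x₁, x₂) with hzdef
      have hzne : z ≠ 0 := by
        rw [hzdef]
        intro hc
        rw [Prod.ext_iff] at hc
        exact hz0 ⟨hc.1, hc.2⟩
      have hzS : z ∈ S := by
        rw [hmem]
        refine ⟨hzne, ?_, ?_⟩
        · have : |(x₁ : ℝ)| ≤ (B : ℝ) := le_trans (le_trans (le_max_left _ _) hx) hwy
          exact_mod_cast this
        · have : ((x₂ : ℝ)) ^ 2 ≤ (B : ℝ) := le_trans (le_trans (le_max_right _ _) hx) hwy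
          exact_mod_cast this
      have hlow : zeta θ₁ θ₂ z ≤ |(x₀ : ℝ) + θ₁ * x₁ + θ₂ * x₂| := by
        calc zeta θ₁ θ₂ z ≤ |(θ₁ * (x₁ : ℝ) + θ₂ * x₂) - ((-x₀ : ℤ) : ℝ)| := dni_le _ _
          _ = |(x₀ : ℝ) + θ₁ * x₁ + θ₂ * x₂| := by push_cast; congr 1; ring
      have hye : zeta θ₁ θ₂ z = zeta θ₁ θ₂ y :=
        le_antisymm (le_trans hlow (hxz.trans (le_refl _))) (hymin z hzS)
      have heq : |(x₀ : ℝ) + θ₁ * x₁ + θ₂ * x₂| = zeta θ₁ θ₂ z :=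
        le_antisymm (hxz.trans hye.ge) hlow
      have hx₀ : x₀ = -round (θ₁ * (x₁ : ℝ) + θ₂ * x₂) := best_x0 h z hzne x₀ heq
      rcases zeta_eq_cases h z y hye with ⟨hzw, hR⟩ | ⟨hzw, hR⟩
      · right; left
        rw [Prod.ext_iff] at hzw
        obtain ⟨e1, e2⟩ := hzw
        simp only [hzdef] at e1 e2
        refine Prod.ext ?_ (Prod.ext ?_ ?_) <;> simp
        · rw [hx₀]
          have : round (θ₁ * (x₁ : ℝ) + θ₂ * x₂) = round (θ₁ * (y.1 : ℝ) + θ₂ * y.2) := hR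
          omega
        · exact e1
        · exact e2
      · right; right
        rw [Prod.ext_iff] at hzw
        obtain ⟨e1, e2⟩ := hzw
        simp only [hzdef, Prod.fst_neg, Prod.snd_neg] at e1 e2
        refine Prod.ext ?_ (Prod.ext ?_ ?_) <;> simp
        · rw [hx₀]
          have : round (θ₁ * (x₁ : ℝ) + θ₂ * x₂) = -round (θ₁ * (y.1 : ℝ) + θ₂ * y.2) := hR
          omega
        · exact e1
        · exact e2


end StmtTwoAux

/-- `ζ_ν · M_{ν+1}³ ≤ 1`. -/
theorem stmt_2 (θ₁ θ₂ : ℝ) (h : LinIndep θ₁ θ₂) (m : ℕ → ℤ × ℤ)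
    (hm : IsBestApproxSeq θ₁ θ₂ m) (ν : ℕ) :
    zeta θ₁ θ₂ (m ν) * (Mval (m (ν + 1))) ^ 3 ≤ 1 := by
  obtain ⟨hall, hmono, hcomp⟩ := hm
  by_contra hcon
  push_neg at hcon
  have hq0 : m (ν + 1) ≠ 0 := (hall (ν + 1)).1
  set W : ℤ := max |(m (ν + 1)).1| ((m (ν + 1)).2 ^ 2) with hW
  have hWw : wsize (m (ν + 1)) = (W : ℝ) := by
    rw [wsize, hW]
    push_cast
    rfl
  have hW1 : 1 ≤ W := by
    rcases (show (m (ν + 1)).1 ≠ 0 ∨ (m (ν + 1)).2 ≠ 0 by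
        by_contra hc; push_neg at hc; exact hq0 (Prod.ext hc.1 hc.2)) with h1 | h2
    · have : 1 ≤ |(m (ν + 1)).1| := Int.one_le_abs h1
      omega
    · have h3 : 1 ≤ |(m (ν + 1)).2| := Int.one_le_abs h2
      have : 1 ≤ (m (ν + 1)).2 ^ 2 := by nlinarith [sq_abs (m (ν + 1)).2]
      omega
  have hWR : (1 : ℝ) ≤ (W : ℝ) := by exact_mod_cast hW1
  have hsqpos : 0 < Real.sqrt W := Real.sqrt_pos.2 (by linarith)
  have hMW : Mval (m (ν + 1)) ^ 3 = (W : ℝ) * Real.sqrt W := by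
    rw [Mval, hWw, pow_succ, Real.sq_sqrt (by linarith)]
  have hζhalf : zeta θ₁ θ₂ (m ν) ≤ 1 / 2 := dni_half _
  rw [hMW] at hcon
  have hW2 : 2 ≤ W := by
    by_contra hc
    have : W = 1 := by omega
    rw [this] at hcon
    simp only [Int.cast_one, Real.sqrt_one, one_mul, mul_one] at hcon
    linarith
  set k : ℕ := Nat.sqrt (W - 1).toNat with hk
  have htn : ((W - 1).toNat : ℤ) = W - 1 := Int.toNat_of_nonneg (by omega)
  have hk1 : ((k : ℤ)) ^ 2 ≤ W - 1 := by
    have h1 := Nat.sqrt_le' (W - 1).toNat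
    calc ((k : ℤ)) ^ 2 = ((k ^ 2 : ℕ) : ℤ) := by push_cast; ring
      _ ≤ ((W - 1).toNat : ℤ) := by exact_mod_cast h1
      _ = W - 1 := htn
  have hk2 : W ≤ ((k : ℤ) + 1) ^ 2 := by
    have h1 := Nat.lt_succ_sqrt' (W - 1).toNat
    have h2 : ((W - 1).toNat : ℤ) < (((Nat.succ k) ^ 2 : ℕ) : ℤ) := by exact_mod_cast h1
    rw [htn] at h2
    have h3 : (((Nat.succ k) ^ 2 : ℕ) : ℤ) = ((k : ℤ) + 1) ^ 2 := by push_cast; ring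
    omega
  obtain ⟨r, hr0, hr1, hr2, hrd⟩ := pigeon θ₁ θ₂ (W - 1) (k : ℤ) (by omega) (by positivity)
  have hrsq : r.2 ^ 2 ≤ W - 1 := by
    calc r.2 ^ 2 = |r.2| ^ 2 := (sq_abs r.2).symm
      _ ≤ ((k : ℤ)) ^ 2 := by
          apply pow_le_pow_left₀ (abs_nonneg r.2) hr2
      _ ≤ W - 1 := hk1
  -- `1/N ≤ 1/(W √W) < ζ_ν`
  have hNW : (W : ℝ) * Real.sqrt W ≤ (((W - 1 + 1) * ((k : ℤ) + 1) : ℤ) : ℝ) := by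
    have hsle : Real.sqrt W ≤ ((k : ℝ) + 1) := by
      rw [show ((k : ℝ) + 1) = Real.sqrt (((k : ℝ) + 1) ^ 2) from
        (Real.sqrt_sq (by positivity)).symm]
      apply Real.sqrt_le_sqrt
      exact_mod_cast hk2
    push_cast
    have hWpos : (0 : ℝ) < (W : ℝ) := by linarith
    nlinarith
  have hζν : 1 / ((W : ℝ) * Real.sqrt W) < zeta θ₁ θ₂ (m ν) := by
    rw [div_lt_iff₀ (by positivity)]
    linarith
  have hrζ : zeta θ₁ θ₂ r < zeta θ₁ θ₂ (m ν) := by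
    apply lt_of_le_of_lt (hrd.trans _) hζν
    apply one_div_le_one_div_of_le (by positivity) hNW
  obtain ⟨y, hybest, hy1, hy2, hyζ⟩ := exists_best θ₁ θ₂ h (W - 1) r hr0 hr1 hrsq
  have hyζν : zeta θ₁ θ₂ y < zeta θ₁ θ₂ (m ν) := lt_of_le_of_lt hyζ hrζ
  have hyw : wsize y ≤ (W : ℝ) - 1 := by
    rw [wsize]
    apply max_le
    · exact_mod_cast (by exact_mod_cast hy1 : |(y.1 : ℝ)| ≤ ((W : ℝ) - 1))
    · exact_mod_cast (by exact_mod_cast hy2 : ((y.2 : ℝ)) ^ 2 ≤ ((W : ℝ) - 1))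
  obtain ⟨μ, hμ⟩ := hcomp y hybest
  have hwμ : wsize (m μ) = wsize y := by
    rcases hμ with he | he
    · rw [he]
    · rw [he, wsize_neg]
  have hζμ : zeta θ₁ θ₂ (m μ) = zeta θ₁ θ₂ y := by
    rcases hμ with he | he
    · rw [he]
    · rw [he, zeta_neg]
  have hμlt : μ < ν + 1 := by
    have h1 : Mval (m μ) < Mval (m (ν + 1)) := by
      apply Mval_lt_Mval
      rw [hwμ, hWw]
      linarith
    exact hmono.lt_iff_lt.1 h1
  have hμν : μ ≠ ν := by
    intro he
    rw [he] at hζμ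
    linarith
  have hwlt : wsize (m μ) < wsize (m ν) :=
    wsize_lt_of_Mval_lt (hmono (by omega : μ < ν))
  obtain ⟨hν0, m₀, hval, hprop⟩ := hall ν
  have h1 : max |((m μ).1 : ℝ)| (((m μ).2 : ℝ) ^ 2) ≤ wsize (m ν) := le_of_lt hwlt
  have h2 : |(((-round (θ₁ * ((m μ).1 : ℝ) + θ₂ * (m μ).2)) : ℤ) : ℝ) +
      θ₁ * (m μ).1 + θ₂ * (m μ).2| ≤ zeta θ₁ θ₂ (m ν) := by
    have he : |(((-round (θ₁ * ((m μ).1 : ℝ) + θ₂ * (m μ).2)) : ℤ) : ℝ) +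
        θ₁ * (m μ).1 + θ₂ * (m μ).2| = zeta θ₁ θ₂ (m μ) := by
      rw [zeta, dni]
      push_cast
      congr 1
      ring
    rw [he, hζμ]
    exact le_of_lt hyζν
  rcases hprop _ (m μ).1 (m μ).2 h1 h2 with h0 | hpos | hneg <;>
      rw [Prod.ext_iff, Prod.ext_iff] at *
  · obtain ⟨-, e1, e2⟩ := h0
    exact (hall μ).1 (Prod.ext e1 e2)
  · obtain ⟨-, e1, e2⟩ := hpos
    apply absurd hwlt
    rw [wsize, wsize, e1, e2]
    exact lt_irrefl _
  · obtain ⟨-, e1, e2⟩ := hneg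
    apply absurd hwlt
    have : wsize (m μ) = wsize (m ν) := by
      rw [wsize, wsize, e1, e2]
      push_cast
      rw [abs_neg, neg_pow]
      ring_nf
    rw [this]
    exact lt_irrefl _
end

section
/- Let 1, θ₁, θ₂ be linearly independent over ℚ and (m_ν) the sequence of best approximation vectors with M_ν = √(max(|m_{ν,1}|, |m_{ν,2}|²)) strictly increasing. Then for every ν, M_{ν+28} ≥ 2·M_ν. -/
set_option maxHeartbeats 1000000


open scoped BigOperators

/- ### auxiliary cell machinery -/

def idx1 (W x : ℤ) : ℤ :=
  if x ≤ -3*W then 0 else if x ≤ -2*W then 1 else if x ≤ -W then 2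
  else if x ≤ 0 then 3 else if x ≤ W - 1 then 4 else if x ≤ 2*W - 1 then 5
  else if x ≤ 3*W - 1 then 6 else 7

def idx2 (g x : ℤ) : ℤ :=
  if x ≤ -(g+1) then 0 else if x ≤ 0 then 1 else if x ≤ g then 2 else 3

lemma idx1_range (W x : ℤ) : 0 ≤ idx1 W x ∧ idx1 W x ≤ 7 := by
  unfold idx1; split_ifs <;> omega

lemma idx2_range (g x : ℤ) : 0 ≤ idx2 g x ∧ idx2 g x ≤ 3 := by
  unfold idx2; split_ifs <;> omega

lemma idx1_diff {W x y : ℤ} (hx : |x| ≤ 4*W - 1) (hy : |y| ≤ 4*W - 1)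
    (h : idx1 W x = idx1 W y) : |x - y| ≤ W - 1 := by
  rw [abs_le] at hx hy ⊢; unfold idx1 at h; split_ifs at h <;> omega

lemma idx1_central {W x : ℤ} (hW : 1 ≤ W) (h : idx1 W x = 3 ∨ idx1 W x = 4) :
    |x| ≤ W - 1 := by
  rw [abs_le]; unfold idx1 at h; split_ifs at h <;> omega

lemma sq_bound {W g x : ℤ} (hg : 0 ≤ g) (hW : W ≤ (g+1)^2) (hx : x^2 ≤ 4*W - 1) :
    -(2*g+1) ≤ x ∧ x ≤ 2*g+1 := by
  constructor <;> nlinarith [sq_nonneg (x + (2*g+2)), sq_nonneg (x - (2*g+2))]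

lemma idx2_diff {W g x y : ℤ} (hg : 0 ≤ g) (hW : W ≤ (g+1)^2)
    (hx : x^2 ≤ 4*W - 1) (hy : y^2 ≤ 4*W - 1) (h : idx2 g x = idx2 g y) :
    |x - y| ≤ g := by
  obtain ⟨hx1, hx2⟩ := sq_bound hg hW hx
  obtain ⟨hy1, hy2⟩ := sq_bound hg hW hy
  rw [abs_le]; unfold idx2 at h; split_ifs at h <;> omega

lemma idx2_central {g x : ℤ} (hg : 0 ≤ g) (h : idx2 g x = 1 ∨ idx2 g x = 2) :
    |x| ≤ g := by
  rw [abs_le]; unfold idx2 at h; split_ifs at h <;> omega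

lemma int_sqrt_spec {W : ℤ} (hW : 1 ≤ W) :
    (Int.sqrt (W-1))^2 ≤ W - 1 ∧ W ≤ (Int.sqrt (W-1) + 1)^2 := by
  set n : ℕ := (W-1).toNat with hn
  have hWn : W - 1 = (n : ℤ) := by omega
  have h1 := Nat.sqrt_le' n
  have h2 := Nat.lt_succ_sqrt' n
  rw [Int.sqrt, hWn, Int.toNat_natCast]
  zify at h1 h2
  constructor
  · nlinarith
  · nlinarith

/-- `M_{ν+28} ≥ 2 M_ν`. -/
theorem stmt_4 (θ₁ θ₂ : ℝ) (h : LinIndep θ₁ θ₂) (m : ℕ → ℤ × ℤ)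
    (hm : IsBestApproxSeq θ₁ θ₂ m) (ν : ℕ) :
    2 * Mval (m ν) ≤ Mval (m (ν + 28)) := by
  classical
  obtain ⟨hba, hmono, -⟩ := hm
  have hw_nonneg : ∀ μ, 0 ≤ wsize (m μ) :=
    fun μ => le_trans (abs_nonneg _) (le_max_left _ _)
  -- integer weighted size
  set Wf : ℕ → ℤ := fun μ => max |(m μ).1| ((m μ).2 ^ 2) with hWfdef
  have hcast : ∀ μ, ((Wf μ : ℤ) : ℝ) = wsize (m μ) := by
    intro μ
    simp only [hWfdef, wsize]
    rw [Int.cast_max, Int.cast_abs, Int.cast_pow]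
  have hwmono : ∀ {μ μ'}, μ ≤ μ' → wsize (m μ) ≤ wsize (m μ') := by
    intro μ μ' hle
    have h1 : Real.sqrt (wsize (m μ)) ≤ Real.sqrt (wsize (m μ')) := hmono.monotone hle
    have e1 := Real.sq_sqrt (hw_nonneg μ)
    have e2 := Real.sq_sqrt (hw_nonneg μ')
    nlinarith [Real.sqrt_nonneg (wsize (m μ)), Real.sqrt_nonneg (wsize (m μ'))]
  have hwstrict : ∀ {μ μ'}, μ < μ' → wsize (m μ) < wsize (m μ') := by
    intro μ μ' hlt
    have h1 : Real.sqrt (wsize (m μ)) < Real.sqrt (wsize (m μ')) := hmono hlt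
    have e1 := Real.sq_sqrt (hw_nonneg μ)
    have e2 := Real.sq_sqrt (hw_nonneg μ')
    nlinarith [Real.sqrt_nonneg (wsize (m μ)), Real.sqrt_nonneg (wsize (m μ'))]
  have hWmono : ∀ {μ μ'}, μ ≤ μ' → Wf μ ≤ Wf μ' := by
    intro μ μ' hle
    have := hwmono hle
    rw [← hcast, ← hcast] at this
    exact_mod_cast this
  have hWstrict : ∀ {μ μ'}, μ < μ' → Wf μ < Wf μ' := by
    intro μ μ' hlt
    have := hwstrict hlt
    rw [← hcast, ← hcast] at this
    exact_mod_cast this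
  set W : ℤ := Wf ν with hWdef
  have hW1 : 1 ≤ W := by
    have hne := (hba ν).1
    have h12 : (m ν).1 ≠ 0 ∨ (m ν).2 ≠ 0 := by
      by_contra hc
      push_neg at hc
      exact hne (Prod.ext hc.1 hc.2)
    have : 1 ≤ |(m ν).1| ∨ 1 ≤ (m ν).2^2 := by
      rcases h12 with h1 | h2
      · left; exact Int.one_le_abs h1
      · right; nlinarith [Int.one_le_abs h2, sq_abs (m ν).2]
    rcases this with h1 | h2
    · exact le_trans h1 (le_max_left _ _)
    · exact le_trans h2 (le_max_right _ _)
  set g : ℤ := Int.sqrt (W - 1) with hgdef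
  have hg0 : 0 ≤ g := Int.sqrt_nonneg _
  obtain ⟨hg2, hgW⟩ := int_sqrt_spec hW1
  rw [← hgdef] at hg2 hgW
  -- zeta positivity
  have hzpos : ∀ μ, 0 < zeta θ₁ θ₂ (m μ) := by
    intro μ
    rcases (abs_nonneg (θ₁ * (m μ).1 + θ₂ * (m μ).2 -
        round (θ₁ * (m μ).1 + θ₂ * (m μ).2))).lt_or_eq with hlt | heq
    · exact hlt
    exfalso
    have hx : θ₁ * (m μ).1 + θ₂ * (m μ).2
        = round (θ₁ * (m μ).1 + θ₂ * (m μ).2) := by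
      have := heq.symm
      rw [abs_eq_zero, sub_eq_zero] at this
      exact this
    obtain ⟨-, h1, h2⟩ := h (-(round (θ₁ * (m μ).1 + θ₂ * (m μ).2)))
      (m μ).1 (m μ).2 (by push_cast; linear_combination hx)
    exact (hba μ).1 (Prod.ext h1 h2)
  -- witnesses
  choose A hA hBest using fun μ => (hba μ).2
  -- zeta strictly decreasing
  have hzstep : ∀ μ, zeta θ₁ θ₂ (m (μ+1)) < zeta θ₁ θ₂ (m μ) := by
    intro μ
    by_contra hc
    push_neg at hc
    have h1 : max |((m μ).1 : ℝ)| (((m μ).2 : ℝ)^2) ≤ wsize (m (μ+1)) :=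
      le_trans (le_of_eq rfl) (hwstrict (lt_add_one μ)).le
    have h2 : |(A μ : ℝ) + θ₁*(m μ).1 + θ₂*(m μ).2| ≤ zeta θ₁ θ₂ (m (μ+1)) :=
      le_trans (le_of_eq (hA μ)) hc
    rcases hBest (μ+1) (A μ) (m μ).1 (m μ).2 h1 h2 with h0 | hp | hn
    · simp only [Prod.mk.injEq] at h0
      exact (hba μ).1 (Prod.ext h0.2.1 h0.2.2)
    · simp only [Prod.mk.injEq] at hp
      have : wsize (m μ) = wsize (m (μ+1)) := by
        unfold wsize
        rw [hp.2.1, hp.2.2]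
      exact absurd (hwstrict (lt_add_one μ)) (by rw [this]; exact lt_irrefl _)
    · simp only [Prod.mk.injEq] at hn
      have : wsize (m μ) = wsize (m (μ+1)) := by
        unfold wsize
        rw [hn.2.1, hn.2.2]
        push_cast
        rw [abs_neg, neg_sq]
      exact absurd (hwstrict (lt_add_one μ)) (by rw [this]; exact lt_irrefl _)
  have hzle : ∀ k : ℕ, zeta θ₁ θ₂ (m (ν+k)) ≤ zeta θ₁ θ₂ (m ν) := by
    intro k
    induction k with
    | zero => exact le_refl _
    | succ n ih => exact le_trans (hzstep (ν+n)).le ih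
  -- main contradiction setup
  by_contra hcon
  push_neg at hcon
  unfold Mval at hcon
  have h4W : wsize (m (ν+28)) < 4 * wsize (m ν) := by
    have h1 := Real.sq_sqrt (hw_nonneg (ν+28))
    have h2 := Real.sq_sqrt (hw_nonneg ν)
    nlinarith [Real.sqrt_nonneg (wsize (m (ν+28))), Real.sqrt_nonneg (wsize (m ν))]
  have hup : ∀ k : ℕ, k ≤ 28 → Wf (ν+k) ≤ 4*W - 1 := by
    intro k hk
    have h1 : wsize (m (ν+k)) ≤ wsize (m (ν+28)) := hwmono (by omega)
    have h2 : ((Wf (ν+k) : ℤ) : ℝ) < ((4*W - 1 + 1 : ℤ) : ℝ) := by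
      rw [hcast]
      calc wsize (m (ν+k)) ≤ wsize (m (ν+28)) := h1
        _ < 4 * wsize (m ν) := h4W
        _ = ((4*W - 1 + 1 : ℤ) : ℝ) := by rw [← hcast ν]; push_cast; ring
    have h3 : Wf (ν+k) < 4*W - 1 + 1 := by exact_mod_cast h2
    omega
  have hlow : ∀ k : ℕ, W ≤ Wf (ν+k) := fun k => hWmono (Nat.le_add_right ν k)
  -- the 58 points and the cell map
  set Q : Fin 29 × Bool → ℤ × ℤ × ℤ := fun u =>
    if u.2 then (A (ν+(u.1:ℕ)), (m (ν+(u.1:ℕ))).1, (m (ν+(u.1:ℕ))).2)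
    else (-(A (ν+(u.1:ℕ))), -(m (ν+(u.1:ℕ))).1, -(m (ν+(u.1:ℕ))).2) with hQdef
  set Fm : ℤ × ℤ × ℤ → ℝ := fun q => (q.1:ℝ) + θ₁*(q.2.1:ℝ) + θ₂*(q.2.2:ℝ) with hFmdef
  have hQ1abs : ∀ u : Fin 29 × Bool, |(Q u).2.1| = |(m (ν+(u.1:ℕ))).1| := by
    intro u; rcases u with ⟨k, b⟩; cases b <;> simp [hQdef]
  have hQ2sq : ∀ u : Fin 29 × Bool, (Q u).2.2^2 = (m (ν+(u.1:ℕ))).2^2 := by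
    intro u; rcases u with ⟨k, b⟩; cases b <;> simp [hQdef]
  have hQ1 : ∀ u : Fin 29 × Bool, |(Q u).2.1| ≤ 4*W - 1 := by
    intro u
    rw [hQ1abs]
    exact le_trans (le_max_left _ _) (hup u.1 (by omega))
  have hQ2 : ∀ u : Fin 29 × Bool, (Q u).2.2^2 ≤ 4*W - 1 := by
    intro u
    rw [hQ2sq]
    exact le_trans (le_max_right _ _) (hup u.1 (by omega))
  have hQw : ∀ u : Fin 29 × Bool, W ≤ max |(Q u).2.1| ((Q u).2.2^2) := by
    intro u
    rw [hQ1abs, hQ2sq]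
    exact hlow u.1
  have hQF : ∀ u : Fin 29 × Bool, |Fm (Q u)| = zeta θ₁ θ₂ (m (ν+(u.1:ℕ))) := by
    intro u; rcases u with ⟨k, b⟩
    cases b
    · simp only [hQdef, hFmdef]
      simp only [Bool.false_eq_true, if_false]
      push_cast
      rw [show -(A (ν+(k:ℕ)) : ℝ) + θ₁*(-(m (ν+(k:ℕ))).1) + θ₂*(-(m (ν+(k:ℕ))).2)
        = -((A (ν+(k:ℕ)) : ℝ) + θ₁*(m (ν+(k:ℕ))).1 + θ₂*(m (ν+(k:ℕ))).2) by ring]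
      rw [abs_neg]
      exact hA _
    · simp only [hQdef, hFmdef, if_true]
      exact hA _
  -- target finset of cells
  set T : Finset (ℤ × ℤ × Bool) :=
    ((Finset.Icc (0:ℤ) 7) ×ˢ (Finset.Icc (0:ℤ) 3) ×ˢ (Finset.univ : Finset Bool)).filter
      (fun c => ¬((c.1 = 3 ∨ c.1 = 4) ∧ (c.2.1 = 1 ∨ c.2.1 = 2))) with hTdef
  have hTcard : T.card = 56 := by decide
  set f : Fin 29 × Bool → ℤ × ℤ × Bool := fun u =>
    (idx1 W (Q u).2.1, idx2 g (Q u).2.2, if 0 < Fm (Q u) then true else false) with hfdef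
  have hmaps : ∀ u ∈ (Finset.univ : Finset (Fin 29 × Bool)), f u ∈ T := by
    intro u _
    rw [hTdef, Finset.mem_filter]
    constructor
    · rw [Finset.mem_product]
      refine ⟨?_, ?_⟩
      · rw [Finset.mem_Icc]; exact idx1_range W _
      · rw [Finset.mem_product]
        exact ⟨by rw [Finset.mem_Icc]; exact idx2_range g _, Finset.mem_univ _⟩
    · rintro ⟨hc1, hc2⟩
      have hx1 : |(Q u).2.1| ≤ W - 1 := idx1_central hW1 hc1
      have hx2 : |(Q u).2.2| ≤ g := idx2_central hg0 hc2
      have hx2' : (Q u).2.2^2 ≤ W - 1 := by nlinarith [abs_nonneg (Q u).2.2, sq_abs (Q u).2.2]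
      have := hQw u
      have : W ≤ W - 1 := le_trans this (max_le (by omega) (by omega))
      omega
  have hcard : T.card < (Finset.univ : Finset (Fin 29 × Bool)).card := by
    rw [hTcard, Finset.card_univ]
    simp
  obtain ⟨u, -, v, -, huv, hfeq⟩ :=
    Finset.exists_ne_map_eq_of_card_lt_of_maps_to hcard hmaps
  rw [hfdef, Prod.mk.injEq, Prod.mk.injEq] at hfeq
  obtain ⟨hi1, hi2, hi3⟩ := hfeq
  -- the difference
  set d0 : ℤ := (Q u).1 - (Q v).1 with hd0def
  set d1 : ℤ := (Q u).2.1 - (Q v).2.1 with hd1def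
  set d2 : ℤ := (Q u).2.2 - (Q v).2.2 with hd2def
  have hd1 : |d1| ≤ W - 1 := idx1_diff (hQ1 u) (hQ1 v) hi1
  have hd2 : |d2| ≤ g := idx2_diff hg0 hgW (hQ2 u) (hQ2 v) hi2
  have hd2sq : d2^2 ≤ W - 1 := by nlinarith [abs_nonneg d2, sq_abs d2]
  -- form bound
  have hFu : |Fm (Q u)| ≤ zeta θ₁ θ₂ (m ν) := by rw [hQF u]; exact hzle _
  have hFv : |Fm (Q v)| ≤ zeta θ₁ θ₂ (m ν) := by rw [hQF v]; exact hzle _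
  have hFu0 : Fm (Q u) ≠ 0 := by
    intro h0
    have := hQF u
    rw [h0, abs_zero] at this
    exact absurd this.symm (ne_of_gt (hzpos _))
  have hFv0 : Fm (Q v) ≠ 0 := by
    intro h0
    have := hQF v
    rw [h0, abs_zero] at this
    exact absurd this.symm (ne_of_gt (hzpos _))
  have hdF : |Fm (Q u) - Fm (Q v)| ≤ zeta θ₁ θ₂ (m ν) := by
    have h1 := le_abs_self (Fm (Q u))
    have h2 := neg_abs_le (Fm (Q u))
    have h3 := le_abs_self (Fm (Q v))
    have h4 := neg_abs_le (Fm (Q v))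
    rw [abs_le]
    by_cases ha : 0 < Fm (Q u) <;> by_cases hb : 0 < Fm (Q v)
    · constructor <;> linarith
    · rw [if_pos ha, if_neg hb] at hi3; exact Bool.noConfusion hi3
    · rw [if_neg ha, if_pos hb] at hi3; exact Bool.noConfusion hi3
    · have ha' : Fm (Q u) < 0 := lt_of_le_of_ne (not_lt.mp ha) hFu0
      have hb' : Fm (Q v) < 0 := lt_of_le_of_ne (not_lt.mp hb) hFv0
      constructor <;> linarith
  -- apply best approximation property of m ν to the difference
  have hcond1 : max |(d1 : ℝ)| ((d2 : ℝ)^2) ≤ wsize (m ν) := by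
    rw [← hcast ν, ← hWdef]
    apply max_le
    · rw [← Int.cast_abs]
      exact_mod_cast le_trans hd1 (by omega)
    · have : ((d2^2 : ℤ) : ℝ) ≤ ((W : ℤ) : ℝ) := by exact_mod_cast le_trans hd2sq (by omega)
      push_cast at this
      linarith
  have hcond2 : |(d0 : ℝ) + θ₁*(d1:ℝ) + θ₂*(d2:ℝ)| ≤ zeta θ₁ θ₂ (m ν) := by
    have heq : (d0 : ℝ) + θ₁*(d1:ℝ) + θ₂*(d2:ℝ) = Fm (Q u) - Fm (Q v) := by
      rw [hd0def, hd1def, hd2def, hFmdef]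
      push_cast
      ring
    rw [heq]
    exact hdF
  have hQuv : Q u ≠ Q v := by
    intro hQeq
    by_cases hk : u.1 = v.1
    · have hb : u.2 ≠ v.2 := by
        intro hb2
        exact huv (Prod.ext hk hb2)
      have hne := (hba (ν+(u.1:ℕ))).1
      have e1 : (Q u).2.1 = (Q v).2.1 := by rw [hQeq]
      have e2 : (Q u).2.2 = (Q v).2.2 := by rw [hQeq]
      rcases u with ⟨k, bu⟩; rcases v with ⟨k', bv⟩
      simp only at hk hb
      subst hk
      apply hne
      cases bu <;> cases bv
      · exact absurd rfl hb
      · simp only [hQdef, Bool.false_eq_true, if_false, if_true] at e1 e2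
        have h1 : (m (ν+(k:ℕ))).1 = 0 := by omega
        have h2 : (m (ν+(k:ℕ))).2 = 0 := by omega
        exact Prod.ext h1 h2
      · simp only [hQdef, Bool.false_eq_true, if_false, if_true] at e1 e2
        have h1 : (m (ν+(k:ℕ))).1 = 0 := by omega
        have h2 : (m (ν+(k:ℕ))).2 = 0 := by omega
        exact Prod.ext h1 h2
      · exact absurd rfl hb
    · have hWne : Wf (ν+(u.1:ℕ)) ≠ Wf (ν+(v.1:ℕ)) := by
        have : (u.1:ℕ) ≠ (v.1:ℕ) := fun hc => hk (Fin.ext hc)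
        rcases Nat.lt_or_ge (u.1:ℕ) (v.1:ℕ) with hlt | hge
        · exact ne_of_lt (hWstrict (by omega))
        · exact (ne_of_lt (hWstrict (by omega))).symm
      apply hWne
      have e1 : |(m (ν+(u.1:ℕ))).1| = |(m (ν+(v.1:ℕ))).1| := by
        rw [← hQ1abs u, ← hQ1abs v, hQeq]
      have e2 : (m (ν+(u.1:ℕ))).2^2 = (m (ν+(v.1:ℕ))).2^2 := by
        rw [← hQ2sq u, ← hQ2sq v, hQeq]
      rw [hWfdef]
      simp only [e1, e2]
  rcases hBest ν d0 d1 d2 hcond1 hcond2 with h0 | hp | hn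
  · simp only [Prod.mk.injEq] at h0
    apply hQuv
    have e0 : (Q u).1 = (Q v).1 := by omega
    have e1 : (Q u).2.1 = (Q v).2.1 := by omega
    have e2 : (Q u).2.2 = (Q v).2.2 := by omega
    exact Prod.ext e0 (Prod.ext e1 e2)
  · simp only [Prod.mk.injEq] at hp
    have hmax : |(m ν).1| = W ∨ (m ν).2^2 = W := by
      rw [hWdef, hWfdef]
      rcases max_choice |(m ν).1| ((m ν).2^2) with hc | hc
      · left; simp [hc]
      · right; simp [hc]
    rcases hmax with hc | hc
    · rw [← hp.2.1] at hc
      omega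
    · rw [← hp.2.2] at hc
      omega
  · simp only [Prod.mk.injEq] at hn
    have hmax : |(m ν).1| = W ∨ (m ν).2^2 = W := by
      rw [hWdef, hWfdef]
      rcases max_choice |(m ν).1| ((m ν).2^2) with hc | hc
      · left; simp [hc]
      · right; simp [hc]
    rcases hmax with hc | hc
    · have : d1 = -(m ν).1 := hn.2.1
      have : |d1| = |(m ν).1| := by rw [this, abs_neg]
      omega
    · have : d2 = -(m ν).2 := hn.2.2
      have : d2^2 = (m ν).2^2 := by rw [this, neg_sq]
      omega
end

section
/- The set difference D = {(x₀,x₁,x₂) ∈ ℝ³ : max(|x₁|, |x₂|²) ≤ 4M², |x₀ + θ₁x₁ + θ₂x₂| ≤ ζ} \ {(x₀,x₁,x₂) : max(|x₁|, |x₂|²) ≤ M², |x₀ + θ₁x₁ + θ₂x₂| ≤ ζ} can be covered by 56 translates of boxes of the form {(x₀,x₁,x₂) : max(2|x₁ − ξ₁|, 4|x₂ − ξ₂|²) ≤ M², |x₀ + θ₁x₁ + θ₂x₂ − ξ₀| ≤ ζ/2}, for any M > 0, ζ > 0, and θ₁, θ₂ ∈ ℝ. -/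
open scoped BigOperators

/-- Index set for the 56 covering boxes: triples `(s,a,b)` with `s ∈ {0,1}`,
`a ∈ {0,…,7}`, `b ∈ {0,…,3}` excluding the four inner cells. -/
def L56 : List (ℤ × ℤ × ℤ) :=
  (List.range 2).flatMap fun s =>
    (List.range 8).flatMap fun a =>
      (((List.range 4).filter fun b =>
          !((a == 3 || a == 4) && (b == 1 || b == 2))).map
        fun b => ((s : ℤ), (a : ℤ), (b : ℤ)))

lemma L56_length : L56.length = 56 := by decide

lemma mem_L56 (s a b : ℤ) (hs0 : 0 ≤ s) (hs : s < 2) (ha0 : 0 ≤ a) (ha : a < 8)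
    (hb0 : 0 ≤ b) (hb : b < 4) (h : ¬((a = 3 ∨ a = 4) ∧ (b = 1 ∨ b = 2))) :
    (s, a, b) ∈ L56 := by
  interval_cases s <;> interval_cases a <;> interval_cases b <;> revert h <;> decide

set_option maxHeartbeats 1000000 in
/-- the annular region can be covered by 56 translated shrunk
boxes. -/
theorem stmt_5 (θ₁ θ₂ M ζ : ℝ) (hM : 0 < M) (hζ : 0 < ζ) :
    ∃ ξ : Fin 56 → ℝ × ℝ × ℝ,
      ∀ x₀ x₁ x₂ : ℝ,
        (max |x₁| (x₂ ^ 2) ≤ 4 * M ^ 2 ∧ |x₀ + θ₁ * x₁ + θ₂ * x₂| ≤ ζ) →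
        ¬(max |x₁| (x₂ ^ 2) ≤ M ^ 2 ∧ |x₀ + θ₁ * x₁ + θ₂ * x₂| ≤ ζ) →
        ∃ i : Fin 56,
          max (2 * |x₁ - (ξ i).2.1|) (4 * (x₂ - (ξ i).2.2) ^ 2) ≤ M ^ 2 ∧
          |x₀ + θ₁ * x₁ + θ₂ * x₂ - (ξ i).1| ≤ ζ / 2 := by
  have hM2 : (0:ℝ) < M ^ 2 := by positivity
  refine ⟨fun i =>
    (fun p : ℤ × ℤ × ℤ =>
      ((2 * (p.1 : ℝ) - 1) * ζ / 2, (2 * (p.2.1 : ℝ) - 7) * M ^ 2 / 2,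
        (2 * (p.2.2 : ℝ) - 3) * M / 2)) (L56.get (Fin.cast L56_length.symm i)), ?_⟩
  rintro x₀ x₁ x₂ ⟨hb1, hb2⟩ hnot
  have hmax : M ^ 2 < max |x₁| (x₂ ^ 2) := by
    by_contra h
    exact hnot ⟨le_of_not_gt h, hb2⟩
  have hx1 : |x₁| ≤ 4 * M ^ 2 := le_trans (le_max_left _ _) hb1
  have hx2sq : x₂ ^ 2 ≤ 4 * M ^ 2 := le_trans (le_max_right _ _) hb1
  have hx2 : |x₂| ≤ 2 * M := by
    nlinarith [sq_abs x₂, abs_nonneg x₂, hM.le]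
  obtain ⟨hx1l, hx1r⟩ := abs_le.mp hx1
  obtain ⟨hx2l, hx2r⟩ := abs_le.mp hx2
  obtain ⟨hLl, hLr⟩ := abs_le.mp hb2
  -- choose the cell indices
  set a : ℤ := min 7 ⌊x₁ / M ^ 2 + 4⌋ with hadef
  set b : ℤ := min 3 ⌊x₂ / M + 2⌋ with hbdef
  set s : ℤ := if 0 ≤ x₀ + θ₁ * x₁ + θ₂ * x₂ then 1 else 0 with hsdef
  have ht0 : (0:ℝ) ≤ x₁ / M ^ 2 + 4 := by
    have : (-4 : ℝ) ≤ x₁ / M ^ 2 := (le_div_iff₀ hM2).mpr (by linarith)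
    linarith
  have ht8 : x₁ / M ^ 2 + 4 ≤ 8 := by
    have : x₁ / M ^ 2 ≤ 4 := (div_le_iff₀ hM2).mpr (by linarith)
    linarith
  have hu0 : (0:ℝ) ≤ x₂ / M + 2 := by
    have : (-2 : ℝ) ≤ x₂ / M := (le_div_iff₀ hM).mpr (by linarith)
    linarith
  have hu4 : x₂ / M + 2 ≤ 4 := by
    have : x₂ / M ≤ 2 := (div_le_iff₀ hM).mpr (by linarith)
    linarith
  have ha0 : 0 ≤ a := le_min (by norm_num) (Int.le_floor.mpr (by exact_mod_cast ht0))
  have ha8 : a < 8 := lt_of_le_of_lt (min_le_left _ _) (by norm_num)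
  have hb0 : 0 ≤ b := le_min (by norm_num) (Int.le_floor.mpr (by exact_mod_cast hu0))
  have hb4 : b < 4 := lt_of_le_of_lt (min_le_left _ _) (by norm_num)
  have halo : (a : ℝ) ≤ x₁ / M ^ 2 + 4 := by
    rcases min_cases 7 ⌊x₁ / M ^ 2 + 4⌋ with ⟨h1, h2⟩ | ⟨h1, h2⟩
    · rw [hadef, h1]
      calc (7:ℝ) ≤ (⌊x₁ / M ^ 2 + 4⌋ : ℝ) := by exact_mod_cast h2
        _ ≤ _ := Int.floor_le _
    · rw [hadef, h1]; exact Int.floor_le _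
  have hahi : x₁ / M ^ 2 + 4 ≤ (a : ℝ) + 1 := by
    rcases min_cases 7 ⌊x₁ / M ^ 2 + 4⌋ with ⟨h1, h2⟩ | ⟨h1, h2⟩
    · rw [hadef, h1]; push_cast; linarith
    · rw [hadef, h1]; exact (Int.lt_floor_add_one _).le
  have hblo : (b : ℝ) ≤ x₂ / M + 2 := by
    rcases min_cases 3 ⌊x₂ / M + 2⌋ with ⟨h1, h2⟩ | ⟨h1, h2⟩
    · rw [hbdef, h1]
      calc (3:ℝ) ≤ (⌊x₂ / M + 2⌋ : ℝ) := by exact_mod_cast h2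
        _ ≤ _ := Int.floor_le _
    · rw [hbdef, h1]; exact Int.floor_le _
  have hbhi : x₂ / M + 2 ≤ (b : ℝ) + 1 := by
    rcases min_cases 3 ⌊x₂ / M + 2⌋ with ⟨h1, h2⟩ | ⟨h1, h2⟩
    · rw [hbdef, h1]; push_cast; linarith
    · rw [hbdef, h1]; exact (Int.lt_floor_add_one _).le
  -- cell bounds on x₁ and x₂
  have hx1lo : ((a : ℝ) - 4) * M ^ 2 ≤ x₁ := by
    have h := (le_div_iff₀ hM2).mp (by linarith : (a : ℝ) - 4 ≤ x₁ / M ^ 2)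
    linarith
  have hx1hi : x₁ ≤ ((a : ℝ) - 3) * M ^ 2 := by
    have h := (div_le_iff₀ hM2).mp (by linarith : x₁ / M ^ 2 ≤ (a : ℝ) - 3)
    linarith
  have hx2lo : ((b : ℝ) - 2) * M ≤ x₂ := by
    have h := (le_div_iff₀ hM).mp (by linarith : (b : ℝ) - 2 ≤ x₂ / M)
    linarith
  have hx2hi : x₂ ≤ ((b : ℝ) - 1) * M := by
    have h := (div_le_iff₀ hM).mp (by linarith : x₂ / M ≤ (b : ℝ) - 1)
    linarith
  have hs0 : 0 ≤ s := by rw [hsdef]; split <;> norm_num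
  have hs2 : s < 2 := by rw [hsdef]; split <;> norm_num
  -- excluded cells
  have hna : ¬((a = 3 ∨ a = 4) ∧ (b = 1 ∨ b = 2)) := by
    rintro ⟨hA, hB⟩
    have h1 : |x₁| ≤ M ^ 2 := by
      rcases hA with h | h <;> rw [h] at hx1lo hx1hi <;> push_cast at hx1lo hx1hi <;>
        rw [abs_le] <;> constructor <;> linarith
    have h2 : x₂ ^ 2 ≤ M ^ 2 := by
      rcases hB with h | h <;> rw [h] at hx2lo hx2hi <;> push_cast at hx2lo hx2hi <;>
        nlinarith
    exact absurd hmax (not_lt.mpr (max_le h1 h2))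
  have hLs : |x₀ + θ₁ * x₁ + θ₂ * x₂ - (2 * (s : ℝ) - 1) * ζ / 2| ≤ ζ / 2 := by
    rw [hsdef]
    split_ifs with h <;> push_cast <;> rw [abs_le] <;> constructor <;> linarith
  clear_value a b s
  clear hadef hbdef hsdef
  have hmem : (s, a, b) ∈ L56 := mem_L56 s a b hs0 hs2 ha0 ha8 hb0 hb4 hna
  obtain ⟨n, hn⟩ := List.mem_iff_get.mp hmem
  refine ⟨Fin.cast L56_length n, ?_⟩
  have hcast : Fin.cast L56_length.symm (Fin.cast L56_length n) = n := by
    ext; simp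
  show max (2 * |x₁ - (2 * (((L56.get (Fin.cast L56_length.symm (Fin.cast L56_length n))).2.1 : ℤ) : ℝ) - 7) * M ^ 2 / 2|)
      (4 * (x₂ - (2 * (((L56.get (Fin.cast L56_length.symm (Fin.cast L56_length n))).2.2 : ℤ) : ℝ) - 3) * M / 2) ^ 2) ≤ M ^ 2 ∧
    |x₀ + θ₁ * x₁ + θ₂ * x₂ - (2 * (((L56.get (Fin.cast L56_length.symm (Fin.cast L56_length n))).1 : ℤ) : ℝ) - 1) * ζ / 2| ≤ ζ / 2
  rw [hcast, hn]
  dsimp only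
  clear hn hcast hmem hna
  constructor
  · apply max_le
    · have h : |x₁ - (2 * (a : ℝ) - 7) * M ^ 2 / 2| ≤ M ^ 2 / 2 :=
        abs_le.mpr ⟨by nlinarith, by nlinarith⟩
      linarith [abs_nonneg (x₁ - (2 * (a : ℝ) - 7) * M ^ 2 / 2), h]
    · have h : |x₂ - (2 * (b : ℝ) - 3) * M / 2| ≤ M / 2 :=
        abs_le.mpr ⟨by nlinarith, by nlinarith⟩
      nlinarith [sq_abs (x₂ - (2 * (b : ℝ) - 3) * M / 2),
        abs_nonneg (x₂ - (2 * (b : ℝ) - 3) * M / 2)]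
  · exact hLs
end

section
/- Let m = (m₁, m₂) ∈ ℤ² with |m₂|² ≥ |m₁| and R^n ≤ |m₂| ≤ R^{n+1} for integers R ≥ 2, n ≥ 1. Let ε = δ/R and δ = 1/R³. Let B = [b₁, b₁ + δ/R^{2n}] × [b₂, b₂ + δ/R^n] be partitioned into R³ congruent subrectangles of dimensions (δ/R^{2(n+1)}) × (δ/R^{n+1}) as a grid (R² subdivisions in the first coordinate, R in the second). Then for R sufficiently large, the number of subrectangles B' containing a point (ξ₁, ξ₂) with ‖ξ₁m₁ + ξ₂m₂‖ < ε is at most 6R². -/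
set_option maxHeartbeats 1000000


open scoped BigOperators

lemma aux_poly (x : ℝ) (hx : 2 ≤ x) : 2 + x + x^2 < x^4 := by
  nlinarith [sq_nonneg (x^2 - 4), sq_nonneg (x - 2), sq_nonneg x]

lemma aux_p1 (w A uR : ℝ) (hw : 0 ≤ w) (hA : 0 ≤ A) (h : A ≤ uR) :
    w*A*A ≤ w*uR*A :=
  mul_le_mul_of_nonneg_right (mul_le_mul_of_nonneg_left h hw) hA

lemma aux_j (h b₂ ξ₂ ξ₂' jr jr' : ℝ) (hh : 0 < h) (h1 : b₂ + jr*h ≤ ξ₂)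
    (h2 : ξ₂' ≤ b₂ + (jr'+1)*h) (h3 : ξ₂ - ξ₂' ≤ 3*h) : jr ≤ jr' + 4 := by
  nlinarith

lemma key_lemma (R n j j' : ℕ) (hR : 2 ≤ R) (hn : 1 ≤ n)
    (m₁ m₂ : ℤ) (hm1 : |(m₁ : ℝ)| ≤ (m₂ : ℝ) ^ 2)
    (hm2l : (R : ℝ) ^ n ≤ |(m₂ : ℝ)|) (hm2u : |(m₂ : ℝ)| ≤ (R : ℝ) ^ (n + 1))
    (b₂ : ℝ) (hjR : j < R) (hj'R : j' < R)
    (ξ₁ ξ₂ ξ₁' ξ₂' : ℝ)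
    (hx : |ξ₁ - ξ₁'| ≤ 1 / (R:ℝ)^3 / (R:ℝ)^(2*(n+1)))
    (h2a : b₂ + (j:ℝ) * (1/(R:ℝ)^3 / (R:ℝ)^(n+1)) ≤ ξ₂)
    (h2b : ξ₂ ≤ b₂ + ((j:ℝ)+1) * (1/(R:ℝ)^3 / (R:ℝ)^(n+1)))
    (h2a' : b₂ + (j':ℝ) * (1/(R:ℝ)^3 / (R:ℝ)^(n+1)) ≤ ξ₂')
    (h2b' : ξ₂' ≤ b₂ + ((j':ℝ)+1) * (1/(R:ℝ)^3 / (R:ℝ)^(n+1)))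
    (hd : dni (ξ₁ * m₁ + ξ₂ * m₂) < 1/(R:ℝ)^3 / R)
    (hd' : dni (ξ₁' * m₁ + ξ₂' * m₂) < 1/(R:ℝ)^3 / R) :
    j ≤ j' + 4 := by
  have hR2 : (2:ℝ) ≤ (R:ℝ) := by exact_mod_cast hR
  have hR0 : (0:ℝ) < (R:ℝ) := by linarith
  simp only [dni] at hd hd'
  set u : ℝ := (R:ℝ)^n with hu
  have hu0 : 0 < u := pow_pos hR0 n
  have huR : (R:ℝ) ≤ u := by
    calc (R:ℝ) = (R:ℝ)^1 := (pow_one _).symm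
    _ ≤ (R:ℝ)^n := pow_le_pow_right₀ (by linarith) hn
  have e1 : (R:ℝ)^(n+1) = u * (R:ℝ) := pow_succ _ _
  have e2 : (R:ℝ)^(2*(n+1)) = (u * (R:ℝ))^2 := by rw [mul_comm 2 (n+1), pow_mul, e1]
  rw [e1] at h2a h2b h2a' h2b' hm2u
  rw [e2] at hx
  clear_value u
  set δ : ℝ := 1/(R:ℝ)^3 with hδ
  have hδ0 : 0 < δ := by positivity
  clear_value δ
  set h : ℝ := δ / (u * R) with hh
  have hh0 : 0 < h := by positivity
  clear_value h
  set w : ℝ := δ / (u*R)^2 with hw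
  have hw0 : 0 < w := by positivity
  clear_value w
  set ε : ℝ := δ / R with hε
  have hε0 : 0 < ε := by positivity
  clear_value ε
  set A : ℝ := |(m₂:ℝ)| with hA
  have hA0 : 0 < A := lt_of_lt_of_le hu0 hm2l
  have hm1' : |(m₁:ℝ)| ≤ A^2 := by rw [hA, sq_abs]; exact hm1
  clear_value A
  set f := ξ₁ * (m₁:ℝ) + ξ₂ * (m₂:ℝ) with hf
  set f' := ξ₁' * (m₁:ℝ) + ξ₂' * (m₂:ℝ) with hf'
  set c : ℤ := round f with hc
  set c' : ℤ := round f' with hc'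
  clear_value c c'
  clear_value f f'
  have hune : u ≠ 0 := ne_of_gt hu0
  have hRne : (R:ℝ) ≠ 0 := ne_of_gt hR0
  have hj1 : (j:ℝ) + 1 ≤ R := by have : j + 1 ≤ R := hjR; exact_mod_cast this
  have hj'1 : (j':ℝ) + 1 ≤ R := by have : j' + 1 ≤ R := hj'R; exact_mod_cast this
  have hj0 : (0:ℝ) ≤ j := Nat.cast_nonneg j
  have hj'0 : (0:ℝ) ≤ j' := Nat.cast_nonneg j'
  have hcol : |ξ₂ - ξ₂'| ≤ R * h := by
    rw [abs_sub_le_iff]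
    constructor
    · have q1 := mul_le_mul_of_nonneg_right hj1 hh0.le
      have q2 := mul_nonneg hj'0 hh0.le
      linarith
    · have q1 := mul_le_mul_of_nonneg_right hj'1 hh0.le
      have q2 := mul_nonneg hj0 hh0.le
      linarith
  have hAuR : A ≤ u * R := hm2u
  have hA2 : A^2 ≤ (u*R)^2 := by
    have := pow_le_pow_left₀ hA0.le hAuR 2
    simpa using this
  have hdiff : |f - f'| ≤ δ + δ * R := by
    have e3 : f - f' = (ξ₁ - ξ₁') * m₁ + (ξ₂ - ξ₂') * m₂ := by rw [hf, hf']; ring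
    rw [e3]
    calc |(ξ₁ - ξ₁') * (m₁:ℝ) + (ξ₂ - ξ₂') * (m₂:ℝ)|
        ≤ |ξ₁-ξ₁'| * |(m₁:ℝ)| + |ξ₂-ξ₂'| * |(m₂:ℝ)| := by
          refine (abs_add_le _ _).trans ?_
          rw [abs_mul, abs_mul]
      _ ≤ w * (u*R)^2 + (R*h) * (u*R) := by
          have t1 : |ξ₁-ξ₁'| * |(m₁:ℝ)| ≤ w * (u*R)^2 :=
            mul_le_mul hx (hm1'.trans hA2) (abs_nonneg _) hw0.le
          have t2 : |ξ₂-ξ₂'| * |(m₂:ℝ)| ≤ (R*h) * (u*R) :=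
            mul_le_mul hcol (by rw [← hA]; exact hm2u) (abs_nonneg _) (by positivity)
          linarith
      _ = δ + δ * R := by rw [hw, hh]; field_simp
  have hcf : |f - (c:ℝ)| < ε := hd
  have hcf' : |f' - (c':ℝ)| < ε := hd'
  have hcc : c = c' := by
    have h1 : |(c:ℝ) - (c':ℝ)| < 1 := by
      have e4 : (c:ℝ) - c' = -(f - c) + (f - f') + (f' - c') := by ring
      have tb : |(c:ℝ) - (c':ℝ)| ≤ |f - c| + |f - f'| + |f' - c'| := by
        rw [e4]
        calc |(-(f - c) + (f - f')) + (f' - c')| ≤ |(-(f-c)) + (f - f')| + |f' - c'| := abs_add_le _ _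
          _ ≤ |(-(f-c))| + |f - f'| + |f' - c'| := by linarith [abs_add_le (-(f-c)) (f-f')]
          _ = |f - c| + |f - f'| + |f' - c'| := by rw [abs_neg]
      have hb : ε + (δ + δ*R) + ε < 1 := by
        have e5 : ε + (δ + δ*R) + ε = (2 + R + (R:ℝ)^2)/(R:ℝ)^4 := by
          rw [hε, hδ]; field_simp; ring
        rw [e5, div_lt_one (by positivity)]
        exact aux_poly _ hR2
      linarith
    have h2 : ((|c - c'| : ℤ) : ℝ) < 1 := by push_cast; exact h1
    have h3 : |c - c'| < 1 := by exact_mod_cast h2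
    have h4 : c - c' = 0 := Int.abs_lt_one_iff.mp h3
    omega
  have hff : |f - f'| < 2*ε := by
    have e6 : f - f' = (f - c) - (f' - c') := by rw [hcc]; ring
    rw [e6]
    calc |(f - c) - (f' - c')| ≤ |f - c| + |f' - c'| := abs_sub _ _
      _ < 2*ε := by linarith
  have key1 : ε = h * u := by rw [hε, hh]; field_simp
  have key2 : h = w * (u*R) := by rw [hh, hw]; field_simp
  have hxi2 : |ξ₂ - ξ₂'| ≤ 3 * h := by
    have step : |ξ₂-ξ₂'| * A ≤ 2*ε + w * A^2 := by
      have e7 : (ξ₂ - ξ₂') * (m₂:ℝ) = (f - f') - (ξ₁ - ξ₁') * m₁ := by rw [hf, hf']; ring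
      calc |ξ₂-ξ₂'| * A = |(ξ₂-ξ₂') * (m₂:ℝ)| := by rw [abs_mul, hA]
        _ = |(f - f') - (ξ₁ - ξ₁') * m₁| := by rw [e7]
        _ ≤ |f - f'| + |ξ₁-ξ₁'| * |(m₁:ℝ)| := by
            refine (abs_sub _ _).trans ?_
            rw [abs_mul]
        _ ≤ 2*ε + w * A^2 := by
            have := mul_le_mul hx hm1' (abs_nonneg _) hw0.le
            linarith
    have p1 : w*A*A ≤ w*(u*R)*A := aux_p1 w A (u*R) hw0.le hA0.le hAuR
    have p2 : w*(u*R)*u ≤ w*(u*R)*A := mul_le_mul_of_nonneg_left hm2l (by positivity)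
    have goal2 : 2*ε + w*A^2 ≤ 3*h*A := by
      calc 2*ε + w*A^2 = 2*(w*(u*R))*u + w*A*A := by rw [key1, key2]; ring
        _ ≤ 2*(w*(u*R))*A + w*(u*R)*A := by linarith
        _ = 3*h*A := by rw [key2]; ring
    exact le_of_mul_le_mul_right (by linarith) hA0
  have hreal : (j:ℝ) ≤ (j':ℝ) + 4 := by
    have hle := le_abs_self (ξ₂ - ξ₂')
    exact aux_j h b₂ ξ₂ ξ₂' _ _ hh0 h2a h2b' (by linarith)
  exact_mod_cast hreal

/-- counting dangerous subrectangles for a type-2 vector. -/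
theorem stmt_7 : ∃ R₀ : ℕ, ∀ R : ℕ, R₀ ≤ R → 2 ≤ R → ∀ n : ℕ, 1 ≤ n →
    ∀ m₁ m₂ : ℤ, |(m₁ : ℝ)| ≤ (m₂ : ℝ) ^ 2 →
    (R : ℝ) ^ n ≤ |(m₂ : ℝ)| → |(m₂ : ℝ)| ≤ (R : ℝ) ^ (n + 1) →
    ∀ b₁ b₂ : ℝ,
    let δ : ℝ := 1 / (R : ℝ) ^ 3
    let ε : ℝ := δ / R
    {ij : Fin (R ^ 2) × Fin R |
      ∃ ξ₁ ξ₂ : ℝ,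
        ξ₁ ∈ Set.Icc (b₁ + (ij.1 : ℝ) * (δ / (R : ℝ) ^ (2 * (n + 1))))
          (b₁ + ((ij.1 : ℝ) + 1) * (δ / (R : ℝ) ^ (2 * (n + 1)))) ∧
        ξ₂ ∈ Set.Icc (b₂ + (ij.2 : ℝ) * (δ / (R : ℝ) ^ (n + 1)))
          (b₂ + ((ij.2 : ℝ) + 1) * (δ / (R : ℝ) ^ (n + 1))) ∧
        dni (ξ₁ * m₁ + ξ₂ * m₂) < ε}.ncard ≤ 6 * R ^ 2 := by
  classical
  refine ⟨2, fun R _ hR n hn m₁ m₂ hm1 hm2l hm2u b₁ b₂ => ?_⟩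
  intro δ ε
  set S : Set (Fin (R ^ 2) × Fin R) :=
    {ij : Fin (R ^ 2) × Fin R |
      ∃ ξ₁ ξ₂ : ℝ,
        ξ₁ ∈ Set.Icc (b₁ + (ij.1 : ℝ) * (δ / (R : ℝ) ^ (2 * (n + 1))))
          (b₁ + ((ij.1 : ℝ) + 1) * (δ / (R : ℝ) ^ (2 * (n + 1)))) ∧
        ξ₂ ∈ Set.Icc (b₂ + (ij.2 : ℝ) * (δ / (R : ℝ) ^ (n + 1)))
          (b₂ + ((ij.2 : ℝ) + 1) * (δ / (R : ℝ) ^ (n + 1))) ∧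
        dni (ξ₁ * m₁ + ξ₂ * m₂) < ε} with hS
  have hkey : ∀ i : Fin (R ^ 2), ∀ j j' : Fin R,
      (i, j) ∈ S → (i, j') ∈ S → (j : ℕ) ≤ (j' : ℕ) + 4 := by
    rintro i j j' ⟨ξ₁, ξ₂, ⟨ha1, ha2⟩, ⟨hb1, hb2⟩, hdj⟩
      ⟨ξ₁', ξ₂', ⟨ha1', ha2'⟩, ⟨hb1', hb2'⟩, hdj'⟩
    refine key_lemma R n j j' hR hn m₁ m₂ hm1 hm2l hm2u b₂ j.isLt j'.isLt
      ξ₁ ξ₂ ξ₁' ξ₂' ?_ hb1 hb2 hb1' hb2' hdj hdj'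
    rw [abs_sub_le_iff]
    constructor <;> simp only at ha1 ha2 ha1' ha2' <;> linarith
  -- minimum j in each column
  let g : Fin (R ^ 2) → ℕ := fun i =>
    sInf {t : ℕ | ∃ jf : Fin R, (i, jf) ∈ S ∧ (jf : ℕ) = t}
  have hg_le : ∀ i : Fin (R ^ 2), ∀ j : Fin R, (i, j) ∈ S → g i ≤ (j : ℕ) :=
    fun i j hj => Nat.sInf_le ⟨j, hj, rfl⟩
  have hg_ub : ∀ i : Fin (R ^ 2), ∀ j : Fin R, (i, j) ∈ S → (j : ℕ) ≤ g i + 4 := by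
    intro i j hj
    obtain ⟨j₀, hj₀S, hj₀v⟩ :=
      Nat.sInf_mem (⟨(j : ℕ), j, hj, rfl⟩ :
        {t : ℕ | ∃ jf : Fin R, (i, jf) ∈ S ∧ (jf : ℕ) = t}.Nonempty)
    have hgi : g i = (j₀ : ℕ) := hj₀v.symm
    have := hkey i j j₀ hj hj₀S
    omega
  rw [Set.ncard_eq_toFinset_card' S]
  have hcard : S.toFinset.card ≤
      (Finset.univ ×ˢ Finset.range 5 : Finset (Fin (R ^ 2) × ℕ)).card := by
    apply Finset.card_le_card_of_injOn (fun p => (p.1, (p.2 : ℕ) - g p.1))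
    · intro p hp
      rw [Finset.mem_coe, Set.mem_toFinset] at hp
      have h1 := hg_le p.1 p.2 hp
      have h2 := hg_ub p.1 p.2 hp
      simp only [Finset.mem_coe, Finset.mem_product, Finset.mem_univ, Finset.mem_range, true_and]
      omega
    · intro p hp q hq hpq
      simp only [Finset.mem_coe, Set.mem_toFinset] at hp hq
      have h1 := hg_le p.1 p.2 hp
      have h2 := hg_le q.1 q.2 hq
      simp only [Prod.mk.injEq] at hpq
      obtain ⟨e1, e2⟩ := hpq
      rw [e1] at e2 h1
      have : (p.2 : ℕ) = (q.2 : ℕ) := by omega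
      exact Prod.ext e1 (Fin.ext this)
  calc S.toFinset.card ≤ _ := hcard
    _ = R ^ 2 * 5 := by
        rw [Finset.card_product, Finset.card_univ, Finset.card_range, Fintype.card_fin]
    _ ≤ 6 * R ^ 2 := by omega
end
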